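/- arXiv:1011.5971 — 6 statements merged into one kernel-verified Lean document; each statement's English description precedes it below -/
import Mathlib

section
/- For any finite word w over alphabet A, there exists a unique shortest palindrome w^(+) having w as a prefix (the palindromic right-closure of w). -/
variable {A : Type*} [DecidableEq A]

/-- `psiW a` is the morphism with `ψ_a(a) = a` and `ψ_a(x) = ax` for `x ≠ a`. -/
def psiW (a : A) (w : List A) : List A :=
  w.flatMap (fun b => if b = a then [a] else [a, b])

/-- `muW x n = ψ_{x 1} ∘ ⋯ ∘ ψ_{x n}`. -/
def muW (x : ℕ → A) : ℕ → List A → List A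
  | 0 => id
  | n + 1 => fun w => muW x n (psiW (x (n + 1)) w)

/-- `hW x n = μ_n (x_{n+1})`. -/
def hW (x : ℕ → A) (n : ℕ) : List A := muW x n [x (n + 1)]

/-- `p` is the palindromic right-closure of `w`: the shortest palindrome having `w`
as a prefix. -/
def IsPalClosure (w p : List A) : Prop :=
  w <+: p ∧ p.reverse = p ∧
    ∀ q : List A, w <+: q → q.reverse = q → p.length ≤ q.length

/-- The finite word `w` is a prefix of the infinite word `s`. -/
def PrefInf (w : List A) (s : ℕ → A) : Prop :=
  ∀ i : ℕ, ∀ h : i < w.length, w[i] = s i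

/-- Number of occurrences (positions) of `w` as a factor of `v`. -/
def occ (w v : List A) : ℕ :=
  (List.range (v.length + 1)).countP
    (fun i => decide (i + w.length ≤ v.length ∧ (v.drop i).take w.length = w))

/-- `cat z k = z 1 ++ z 2 ++ ⋯ ++ z k`. -/
def cat (z : ℕ → List A) (k : ℕ) : List A := ((List.range' 1 k).map z).flatten

/-- `z` is the Ziv-Lempel factorization of the infinite word `s`: each `z m` is
the shortest prefix of `z m · z (m+1) ⋯` occurring only once in `z 1 ⋯ z m`. -/
def IsZFact (s : ℕ → A) (z : ℕ → List A) : Prop :=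
  ∀ m : ℕ, 1 ≤ m → z m ≠ [] ∧ PrefInf (cat z m) s ∧
    occ (z m) (cat z m) = 1 ∧
    ∀ p : List A, p <+: z m → p ≠ z m → 2 ≤ occ p (cat z m)

/-- `c` is the Crochemore factorization of the infinite word `s`: each `c m` is
either a fresh letter, or the longest prefix of `c m · c (m+1) ⋯` occurring
twice in `c 1 ⋯ c m`. -/
def IsCFact (s : ℕ → A) (c : ℕ → List A) : Prop :=
  ∀ m : ℕ, 1 ≤ m → c m ≠ [] ∧ PrefInf (cat c m) s ∧
    ((∃ a : A, c m = [a] ∧ a ∉ cat c (m - 1)) ∨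
      (2 ≤ occ (c m) (cat c m) ∧
        occ (c m ++ [s (cat c m).length]) (cat c m ++ [s (cat c m).length]) = 1))

/-- Two palindromes of equal length `≤ 2|w|` with `w` as prefix are equal. -/
lemma pal_prefix_ext {w p q : List A} (hp : p.reverse = p) (hq : q.reverse = q)
    (hwp : w <+: p) (hwq : w <+: q) (hlen : p.length = q.length)
    (hsh : p.length ≤ 2 * w.length) : p = q := by
  have hwl : w.length ≤ p.length := hwp.length_le
  apply List.ext_getElem hlen
  intro i hip hiq
  by_cases hi : i < w.length
  · rw [← hwp.getElem hi, ← hwq.getElem hi]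
  · push_neg at hi
    have hj : p.length - 1 - i < w.length := by omega
    have h1 : p[i] = p[p.length - 1 - i] := by
      have := List.getElem_reverse (l := p) (i := i) (h := by simpa using hip)
      simpa [hp] using this
    have h2 : q[i] = q[q.length - 1 - i]'(by omega) := by
      have := List.getElem_reverse (l := q) (i := i) (h := by simpa using hiq)
      simpa [hq] using this
    rw [h1, h2, ← hwp.getElem hj, ← hwq.getElem (by omega : q.length - 1 - i < w.length)]
    congr 1
    omega

theorem pal_closure_exists_unique (w : List A) :
    ∃! p : List A, IsPalClosure w p := by
  classical
  have hne : ∃ n : ℕ, ∃ p : List A, p.length = n ∧ w <+: p ∧ p.reverse = p :=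
    ⟨(w ++ w.reverse).length, w ++ w.reverse, rfl, ⟨w.reverse, rfl⟩, by simp⟩
  obtain ⟨p, hplen, hwp, hp⟩ := Nat.find_spec hne
  have hmin : ∀ q : List A, w <+: q → q.reverse = q → p.length ≤ q.length := by
    intro q hwq hq
    rw [hplen]
    exact Nat.find_le ⟨q, rfl, hwq, hq⟩
  have hsh : p.length ≤ 2 * w.length := by
    have := hmin (w ++ w.reverse) ⟨w.reverse, rfl⟩ (by simp)
    simpa [two_mul] using this
  refine ⟨p, ⟨hwp, hp, hmin⟩, ?_⟩
  rintro q ⟨hwq, hq, hqmin⟩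
  exact pal_prefix_ext hq hp hwq hwp
    (le_antisymm (hqmin p hwp hp) (hmin q hwq hq))
    (le_trans (hqmin p hwp hp) hsh)
end

section
/- Let (u_n) be the sequence of palindromic prefixes of a standard episturmian word with directive word x_1 x_2 ⋯, defined by u_1 = ε and u_{n+1} = (u_n x_n)^(+). Let μ_0 = Id, μ_n = ψ_{x_1} ∘ ⋯ ∘ ψ_{x_n}, and h_n = μ_n(x_{n+1}). Then u_{n+1} = h_{n-1} u_n for all n ≥ 1. -/
variable {A : Type*} [DecidableEq A]

lemma suffix_append_split {t u v : List A} (h : t <:+ u ++ v) :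
    t <:+ v ∨ ∃ u', u' <:+ u ∧ t = u' ++ v := by
  rcases List.suffix_or_suffix_of_suffix h (List.suffix_append u v) with h1 | h1
  · exact Or.inl h1
  · obtain ⟨s, hs⟩ := h
    obtain ⟨r, hr⟩ := h1
    right
    refine ⟨r, ⟨s, ?_⟩, hr.symm⟩
    have h2 : (s ++ r) ++ v = u ++ v := by rw [List.append_assoc, hr, hs]
    exact List.append_cancel_right h2

lemma psiW_nil (a : A) : psiW a [] = [] := rfl

lemma psiW_append (a : A) (u v : List A) : psiW a (u ++ v) = psiW a u ++ psiW a v := by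
  simp [psiW]

lemma psiW_cons (a b : A) (w : List A) :
    psiW a (b :: w) = (if b = a then [a] else [a, b]) ++ psiW a w := by
  simp [psiW]

lemma psiW_reverse (a : A) (w : List A) :
    (psiW a w ++ [a]).reverse = psiW a w.reverse ++ [a] := by
  induction w with
  | nil => simp [psiW]
  | cons b t ih =>
    rw [psiW_cons, List.reverse_cons, psiW_append]
    rw [show (((if b = a then [a] else [a,b]) ++ psiW a t) ++ [a]).reverse
        = (psiW a t ++ [a]).reverse ++ (if b = a then [a] else [a,b]).reverse by simp, ih]
    by_cases hb : b = a <;> simp [hb, psiW]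

lemma psiW_length_le (a : A) (u v : List A) (h : u <:+ v) :
    (psiW a u).length ≤ (psiW a v).length := by
  obtain ⟨t, rfl⟩ := h
  simp [psiW_append]

lemma psiW_injective (a : A) : Function.Injective (psiW a) := by
  intro u
  induction u with
  | nil =>
    intro v h
    cases v with
    | nil => rfl
    | cons c t => rw [psiW_cons] at h; by_cases hc : c = a <;> simp [hc, psiW_nil] at h
  | cons b t ih =>
    intro v h
    cases v with
    | nil => rw [psiW_cons] at h; by_cases hb : b = a <;> simp [hb, psiW_nil] at h
    | cons c s =>
      rw [psiW_cons, psiW_cons] at h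
      by_cases hb : b = a <;> by_cases hc : c = a <;> simp [hb, hc] at h
      · rw [hb, hc, ih h]
      · exfalso
        cases t with
        | nil => simp [psiW_nil] at h
        | cons d t' => rw [psiW_cons] at h; by_cases hd : d = a <;> simp [hd] at h <;> exact hc (h.1.symm)
      · exfalso
        cases s with
        | nil => simp [psiW_nil] at h
        | cons d s' => rw [psiW_cons] at h; by_cases hd : d = a <;> simp [hd] at h <;> exact hb (h.1)
      · rw [h.1, ih h.2]

lemma psiW_suffix_struct (a : A) (w : List A) :
    ∀ t : List A, t <:+ psiW a w ++ [a] → t ≠ [] → t.head? = some a →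
      ∃ s : List A, s <:+ w ∧ t = psiW a s ++ [a] := by
  induction w with
  | nil =>
    intro t ht hne _
    refine ⟨[], List.suffix_refl _, ?_⟩
    rw [psiW_nil] at ht ⊢
    rcases List.suffix_cons_iff.mp ht with rfl | h'
    · rfl
    · exact absurd (List.eq_nil_of_suffix_nil h') hne
  | cons b u ih =>
    intro t ht hne hhd
    rw [psiW_cons, List.append_assoc] at ht
    rcases suffix_append_split ht with h | ⟨u', hu', rfl⟩
    · obtain ⟨s, hs, rfl⟩ := ih t h hne hhd
      exact ⟨s, hs.trans (List.suffix_cons _ _), rfl⟩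
    · by_cases hb : b = a <;> simp only [hb, if_pos, if_neg, ite_true, ite_false] at hu'
      · rcases List.suffix_cons_iff.mp hu' with rfl | h'
        · exact ⟨b :: u, List.suffix_refl _, by simp [psiW_cons, hb]⟩
        · obtain rfl : u' = [] := List.eq_nil_of_suffix_nil h'
          exact ⟨u, List.suffix_cons _ _, by simp⟩
      · rcases List.suffix_cons_iff.mp hu' with rfl | h'
        · exact ⟨b :: u, List.suffix_refl _, by simp [psiW_cons, hb]⟩
        · rcases List.suffix_cons_iff.mp h' with rfl | h''
          · exfalso; simp at hhd; exact hb hhd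
          · obtain rfl : u' = [] := List.eq_nil_of_suffix_nil h''
            exact ⟨u, List.suffix_cons _ _, by simp⟩

lemma getElem_idx (l : List A) (i j : ℕ) (h : i = j) (hi : i < l.length) :
    l[i]'hi = l[j]'(h ▸ hi) := by subst h; rfl

lemma pal_getElem {p : List A} (hp : p.reverse = p) (i : ℕ) (hi : i < p.length) :
    p[i] = p[p.length - 1 - i]'(by omega) := by
  rw [List.getElem_of_eq hp.symm hi, List.getElem_reverse]

lemma palClosure_unique {w p q : List A} (hp : IsPalClosure w p) (hq : IsPalClosure w q) :
    p = q := by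
  obtain ⟨hwp, hpal, hmin⟩ := hp
  obtain ⟨hwq, hqal, hmin'⟩ := hq
  have hlen : p.length = q.length := le_antisymm (hmin q hwq hqal) (hmin' p hwp hpal)
  have hbound : p.length ≤ 2 * w.length := by
    have := hmin (w ++ w.reverse) (List.prefix_append _ _) (by simp)
    simpa [two_mul] using this
  apply List.ext_getElem hlen
  intro i h1 h2
  by_cases hi : i < w.length
  · rw [← hwp.getElem hi, ← hwq.getElem hi]
  · have hip : p.length - 1 - i < w.length := by omega
    have hiq : q.length - 1 - i < w.length := by omega
    rw [pal_getElem hpal i h1, pal_getElem hqal i h2,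
      ← hwp.getElem (by omega : p.length - 1 - i < w.length),
      ← hwq.getElem (by omega : q.length - 1 - i < w.length)]
    congr 1
    omega

/-- If `q` is the longest palindromic suffix of `w = v ++ q`, then `w ++ v.reverse`
is the palindromic closure of `w`. -/
lemma isPalClosure_of_lps {w v q : List A} (hw : w = v ++ q) (hq : q.reverse = q)
    (hmax : ∀ q' : List A, q' <:+ w → q'.reverse = q' → q'.length ≤ q.length) :
    IsPalClosure w (w ++ v.reverse) := by
  refine ⟨List.prefix_append _ _, ?_, ?_⟩
  · rw [hw]; simp [hq]
  · intro r hwr hral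
    by_contra hlt
    push_neg at hlt
    -- overlap length k
    have hwl : w.length = v.length + q.length := by rw [hw]; simp
    have hrw : w.length ≤ r.length := hwr.length_le
    set k := 2 * w.length - r.length with hk
    have hkq : q.length < k := by simp at hlt; omega
    have hkw : k ≤ w.length := by omega
    have hol : (w.drop (w.length - k)).length = k := by simp; omega
    have hopal : (w.drop (w.length - k)).reverse = w.drop (w.length - k) := by
      apply List.ext_getElem (by simp)
      intro j hj1 hj2
      have hjk : j < k := by simpa [hol] using hj2
      rw [List.getElem_reverse]
      rw [List.getElem_drop, List.getElem_drop]
      have hb1 : w.length - 1 - j < w.length := by omega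
      have hb2 : w.length - k + j < w.length := by omega
      rw [getElem_idx w _ (w.length - 1 - j) (by simp only [List.length_drop]; omega)]
      rw [hwr.getElem hb1, hwr.getElem hb2]
      rw [pal_getElem hral (w.length - k + j) (by omega)]
      exact getElem_idx r _ _ (by omega) _
    have := hmax _ (List.drop_suffix (w.length - k) w) hopal
    omega

-- pc layer, to be appended after clo layer
/-- start index of the longest palindromic suffix of `w`. -/
def lps (w : List A) : ℕ :=
  Nat.find (⟨w.length, by simp⟩ : ∃ k, (w.drop k).reverse = w.drop k)

lemma lps_spec (w : List A) : (w.drop (lps w)).reverse = w.drop (lps w) := by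
  unfold lps
  exact Nat.find_spec (⟨w.length, by simp⟩ : ∃ k, (w.drop k).reverse = w.drop k)

lemma lps_min {w : List A} {k : ℕ} (h : (w.drop k).reverse = w.drop k) : lps w ≤ k := by
  unfold lps
  exact Nat.find_le h

lemma lps_max (w : List A) {q : List A} (hq : q <:+ w) (hpal : q.reverse = q) :
    q.length ≤ (w.drop (lps w)).length := by
  have hqd : q = w.drop (w.length - q.length) := by
    obtain ⟨t, rfl⟩ := hq; simp
  have : lps w ≤ w.length - q.length := lps_min (by rw [← hqd]; exact hpal)
  have hql := hq.length_le
  simp only [List.length_drop]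
  omega

/-- The palindromic closure of `w`. -/
def pc (w : List A) : List A := w ++ (w.take (lps w)).reverse

lemma isPalClosure_pc (w : List A) : IsPalClosure w (pc w) := by
  have h := isPalClosure_of_lps (w := w) (v := w.take (lps w)) (q := w.drop (lps w))
    (by simp) (lps_spec w) (fun q' hq' hp' => lps_max w hq' hp')
  exact h

lemma pc_eq {w p : List A} (h : IsPalClosure w p) : p = pc w :=
  palClosure_unique h (isPalClosure_pc w)

lemma pc_singleton (a : A) : pc [a] = [a] := by
  have : IsPalClosure [a] [a] := ⟨List.prefix_refl _, by simp, fun q hq _ => hq.length_le⟩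
  exact (pc_eq this).symm

/-- Justin's formula. -/
lemma pc_psiW (a : A) (w : List A) (hw : w ≠ []) :
    pc (psiW a w ++ [a]) = psiW a (pc w) ++ [a] := by
  -- decomposition of w by its longest palindromic suffix
  have hvq : w = w.take (lps w) ++ w.drop (lps w) := by simp
  have hqpal := lps_spec w
  -- pc w = w ++ (take).reverse
  -- the longest palindromic suffix of psiW a w ++ [a] is psiW a (w.drop (lps w)) ++ [a]
  have hmax : ∀ q' : List A, q' <:+ psiW a w ++ [a] → q'.reverse = q' →
      q'.length ≤ (psiW a (w.drop (lps w)) ++ [a]).length := by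
    intro t ht hpal
    rcases eq_or_ne t [] with rfl | hne
    · simp
    · have hhd : t.head? = some a := by
        rw [← hpal, List.head?_reverse]
        obtain ⟨r, hr⟩ := ht
        rw [← List.getLast?_append_of_ne_nil r hne, hr]
        simp
      obtain ⟨s, hs, rfl⟩ := psiW_suffix_struct a w t ht hne hhd
      have hspal : s.reverse = s := by
        apply psiW_injective a
        have := psiW_reverse a s
        rw [hpal] at this
        exact (List.append_cancel_right this).symm
      have hsq : s.length ≤ (w.drop (lps w)).length := lps_max w hs hspal
      have : s <:+ w.drop (lps w) := by
        rcases List.suffix_or_suffix_of_suffix hs (List.drop_suffix (lps w) w) with h | h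
        · exact h
        · have hds : w.drop (lps w) = s := List.IsSuffix.eq_of_length_le h hsq
          exact hds ▸ List.suffix_refl _
      have := psiW_length_le a s (w.drop (lps w)) this
      simp only [List.length_append, List.length_singleton]
      omega
  -- apply the closure formula
  have hdec : psiW a w ++ [a] = psiW a (w.take (lps w)) ++ (psiW a (w.drop (lps w)) ++ [a]) := by
    conv_lhs => rw [hvq]
    rw [psiW_append, List.append_assoc]
  have hqpal' : (psiW a (w.drop (lps w)) ++ [a]).reverse = psiW a (w.drop (lps w)) ++ [a] := by
    rw [psiW_reverse, hqpal]
  have hC := isPalClosure_of_lps hdec hqpal' hmax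
  have : pc (psiW a w ++ [a]) = (psiW a w ++ [a]) ++ (psiW a (w.take (lps w))).reverse :=
    (pc_eq hC).symm
  rw [this, pc, psiW_append, List.append_assoc, List.append_assoc]
  congr 1
  have h2 := psiW_reverse a (w.take (lps w))
  rw [List.reverse_append] at h2
  simpa using h2

lemma pal_overlap {r u : List A} (hral : r.reverse = r) (hur : u <+: r)
    (h2 : r.length ≤ 2 * u.length) :
    (u.drop (r.length - u.length)).reverse = u.drop (r.length - u.length) := by
  have hru : u.length ≤ r.length := hur.length_le
  apply List.ext_getElem (by simp)
  intro j hj1 hj2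
  have hjk : j < 2 * u.length - r.length := by
    simp only [List.length_drop] at hj2; omega
  rw [List.getElem_reverse]
  rw [List.getElem_drop, List.getElem_drop]
  have hb1 : u.length - 1 - j < u.length := by omega
  have hb2 : r.length - u.length + j < u.length := by omega
  rw [getElem_idx u _ (u.length - 1 - j) (by simp only [List.length_drop]; omega)]
  rw [hur.getElem hb1, hur.getElem hb2]
  rw [pal_getElem hral (r.length - u.length + j) (by omega)]
  exact getElem_idx r _ _ (by omega) _

lemma psiW_suffix_struct' (a : A) (w : List A) :
    ∀ t : List A, t <:+ psiW a w ++ [a] → t ≠ [] →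
      (∃ s : List A, s <:+ w ∧ t = psiW a s ++ [a]) ∨
      (∃ c : A, ∃ s : List A, c ≠ a ∧ c :: s <:+ w ∧ t = c :: (psiW a s ++ [a])) := by
  induction w with
  | nil =>
    intro t ht hne
    left
    refine ⟨[], List.suffix_refl _, ?_⟩
    rw [psiW_nil] at ht ⊢
    rcases List.suffix_cons_iff.mp ht with rfl | h'
    · rfl
    · exact absurd (List.eq_nil_of_suffix_nil h') hne
  | cons b u ih =>
    intro t ht hne
    rw [psiW_cons, List.append_assoc] at ht
    rcases suffix_append_split ht with h | ⟨u', hu', rfl⟩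
    · rcases ih t h hne with ⟨s, hs, rfl⟩ | ⟨c, s, hc, hcs, rfl⟩
      · exact Or.inl ⟨s, hs.trans (List.suffix_cons _ _), rfl⟩
      · exact Or.inr ⟨c, s, hc, hcs.trans (List.suffix_cons _ _), rfl⟩
    · by_cases hb : b = a <;> simp only [hb, ite_true, ite_false] at hu'
      · rcases List.suffix_cons_iff.mp hu' with rfl | h'
        · exact Or.inl ⟨b :: u, List.suffix_refl _, by simp [psiW_cons, hb]⟩
        · obtain rfl : u' = [] := List.eq_nil_of_suffix_nil h'
          exact Or.inl ⟨u, List.suffix_cons _ _, by simp⟩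
      · rcases List.suffix_cons_iff.mp hu' with rfl | h'
        · exact Or.inl ⟨b :: u, List.suffix_refl _, by simp [psiW_cons, hb]⟩
        · rcases List.suffix_cons_iff.mp h' with rfl | h''
          · exact Or.inr ⟨b, u, hb, List.suffix_refl _, rfl⟩
          · obtain rfl : u' = [] := List.eq_nil_of_suffix_nil h''
            exact Or.inl ⟨u, List.suffix_cons _ _, by simp⟩

lemma length_le_psiW (a : A) (u : List A) : u.length ≤ (psiW a u).length := by
  induction u with
  | nil => simp [psiW_nil]
  | cons b t ih => rw [psiW_cons]; by_cases hb : b = a <;> simp [hb] <;> omega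

lemma head?_psiW_cons (a d : A) (s : List A) : (psiW a (d :: s)).head? = some a := by
  rw [psiW_cons]; by_cases hd : d = a <;> simp [hd]

/-- No long palindromic suffix of `psiW a w` when `w` ends in a letter `≠ a`. -/
lemma pal_suffix_psiW_short {a c : A} (hc : c ≠ a) {w₀ o : List A}
    (ho : o <:+ psiW a (w₀ ++ [c])) (hopal : o.reverse = o)
    (hlen : (psiW a ((w₀ ++ [c]).drop (lps (w₀ ++ [c])))).length ≤ o.length) : False := by
  have hone : 1 ≤ ((w₀ ++ [c]).drop (lps (w₀ ++ [c]))).length := by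
    have := lps_max (w₀ ++ [c]) (q := [c]) ⟨w₀, rfl⟩ (by simp)
    simpa using this
  obtain ⟨d, s0, hds⟩ : ∃ d s0, (w₀ ++ [c]).drop (lps (w₀ ++ [c])) = d :: s0 := by
    cases hh : (w₀ ++ [c]).drop (lps (w₀ ++ [c])) with
    | nil => rw [hh] at hone; simp at hone
    | cons d s0 => exact ⟨d, s0, rfl⟩
  have hqlen : 1 ≤ (psiW a ((w₀ ++ [c]).drop (lps (w₀ ++ [c])))).length :=
    le_trans (by rw [hds]; simp) (length_le_psiW a _)
  have hone' : o ≠ [] := by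
    intro h; rw [h] at hlen
    simp only [List.length_nil, Nat.le_zero] at hlen
    omega
  have holast : o.getLast? = some c := by
    obtain ⟨r0, hr0⟩ := ho
    rw [← List.getLast?_append_of_ne_nil r0 hone', hr0, psiW_append, psiW_cons,
      if_neg hc, psiW_nil, List.append_nil,
      List.getLast?_append_of_ne_nil (psiW a w₀) (l₂ := [a, c]) (by simp)]
    simp
  have hhead : o.head? = some c := by
    rw [← hopal, List.head?_reverse]; exact holast
  -- apply structure lemma to o ++ [a]
  have hsuf : o ++ [a] <:+ psiW a (w₀ ++ [c]) ++ [a] := by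
    obtain ⟨r0, hr0⟩ := ho
    exact ⟨r0, by rw [← List.append_assoc, hr0]⟩
  rcases psiW_suffix_struct' a (w₀ ++ [c]) (o ++ [a]) hsuf (by simp) with
    ⟨s, hs, heq⟩ | ⟨c', s, hc', hcs, heq⟩
  · have ho2 : o = psiW a s := List.append_cancel_right heq
    cases s with
    | nil => rw [ho2, psiW_nil] at hone'; exact hone' rfl
    | cons d' s' =>
      rw [ho2, head?_psiW_cons] at hhead
      exact hc (Option.some_injective _ hhead).symm
  · have ho2 : o = c' :: psiW a s := by
      have : o ++ [a] = (c' :: psiW a s) ++ [a] := by simpa using heq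
      exact List.append_cancel_right this
    -- c' :: s is a palindromic suffix of w₀ ++ [c]
    have hform : psiW a (c' :: s) ++ [a] = (a :: o) ++ [a] := by
      rw [psiW_cons, ho2]; simp [hc']
    have hpal2 : (psiW a (c' :: s) ++ [a]).reverse = psiW a (c' :: s) ++ [a] := by
      rw [hform]; simp [hopal]
    have hpal3 : (c' :: s).reverse = c' :: s := by
      apply psiW_injective a
      have h3 := psiW_reverse a (c' :: s)
      rw [hpal2] at h3
      exact (List.append_cancel_right h3).symm
    have hmax := lps_max (w₀ ++ [c]) hcs hpal3
    rcases List.suffix_or_suffix_of_suffix hcs (List.drop_suffix (lps (w₀ ++ [c])) (w₀ ++ [c]))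
      with h | h
    · have hlen2 := psiW_length_le a _ _ h
      rw [psiW_cons, if_neg hc'] at hlen2
      rw [ho2] at hlen
      simp only [List.length_append, List.length_cons] at hlen hlen2
      simp at hlen hlen2
      omega
    · have heq2 : (w₀ ++ [c]).drop (lps (w₀ ++ [c])) = c' :: s :=
        List.IsSuffix.eq_of_length_le h (by simpa using hmax)
      rw [heq2, psiW_cons, if_neg hc', ho2] at hlen
      simp at hlen

/-- Justin's formula, second form: when `w` ends in a letter `≠ a`. -/
lemma pc_psiW' (a c : A) (hc : c ≠ a) (w₀ : List A) :
    pc (psiW a (w₀ ++ [c])) = psiW a (pc (w₀ ++ [c])) ++ [a] := by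
  set w := w₀ ++ [c] with hwdef
  have hpc := isPalClosure_pc w
  -- expression for psiW a (pc w) ++ [a]
  have hE : psiW a (pc w) ++ [a] = (psiW a w ++ [a]) ++ (psiW a (w.take (lps w))).reverse := by
    rw [pc, psiW_append, List.append_assoc, List.append_assoc]
    congr 1
    have h2 := psiW_reverse a (w.take (lps w))
    rw [List.reverse_append] at h2
    simpa using h2.symm
  have hlenvw : (psiW a w).length = (psiW a (w.take (lps w))).length
      + (psiW a (w.drop (lps w))).length := by
    conv_lhs => rw [show w = w.take (lps w) ++ w.drop (lps w) by simp]
    rw [psiW_append]; simp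
  symm
  apply pc_eq
  refine ⟨⟨[a] ++ (psiW a (w.take (lps w))).reverse, by rw [hE]; simp⟩, ?_, ?_⟩
  · have := psiW_reverse a (pc w)
    rw [(isPalClosure_pc w).2.1] at this
    exact this
  · intro r hwr hral
    by_contra hlt
    push_neg at hlt
    rw [hE] at hlt
    simp only [List.length_append, List.length_reverse, List.length_singleton] at hlt
    have hru : (psiW a w).length ≤ r.length := hwr.length_le
    have h2 : r.length ≤ 2 * (psiW a w).length := by omega
    have hopal := pal_overlap hral hwr h2
    have hosuf : (psiW a w).drop (r.length - (psiW a w).length) <:+ psiW a w :=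
      List.drop_suffix _ _
    apply pal_suffix_psiW_short hc (w₀ := w₀) hosuf hopal
    simp only [List.length_drop, ← hwdef]
    omega

lemma muW_shift (x : ℕ → A) : ∀ (m : ℕ) (w : List A),
    muW x (m + 1) w = psiW (x 1) (muW (fun k => x (k + 1)) m w) := by
  intro m
  induction m with
  | zero => intro w; rfl
  | succ m ih =>
    intro w
    have h1 : muW x (m + 2) w = muW x (m + 1) (psiW (x (m + 2)) w) := rfl
    rw [h1, ih]
    rfl

lemma hW_shift (x : ℕ → A) (m : ℕ) :
    psiW (x 1) (hW (fun k => x (k + 1)) m) = hW x (m + 1) := by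
  rw [hW, hW, muW_shift]

/-- The canonical sequence of palindromic prefixes. -/
def U (x : ℕ → A) : ℕ → List A
  | 0 => []
  | 1 => []
  | n + 2 => pc (U x (n + 1) ++ [x (n + 1)])

lemma U_one (x : ℕ → A) : U x 1 = [] := rfl

lemma U_shift (x : ℕ → A) : ∀ n : ℕ, 1 ≤ n →
    U x (n + 1) = psiW (x 1) (U (fun k => x (k + 1)) n) ++ [x 1] := by
  intro n hn
  induction n, hn using Nat.le_induction with
  | base =>
    have h1 : U x 2 = pc ([] ++ [x 1]) := rfl
    rw [h1, List.nil_append, pc_singleton, U_one, psiW_nil, List.nil_append]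
  | succ n hn ih =>
    obtain ⟨m, rfl⟩ : ∃ m, n = m + 1 := ⟨n - 1, by omega⟩
    have h1 : U x (m + 3) = pc (U x (m + 2) ++ [x (m + 2)]) := rfl
    rw [h1, ih]
    by_cases hb : x (m + 2) = x 1
    · have harg : (psiW (x 1) (U (fun k => x (k + 1)) (m + 1)) ++ [x 1]) ++ [x (m + 2)]
          = psiW (x 1) (U (fun k => x (k + 1)) (m + 1) ++ [x (m + 2)]) ++ [x 1] := by
        rw [psiW_append, psiW_cons, if_pos hb, psiW_nil, hb]
        simp
      rw [harg, pc_psiW (x 1) _ (by simp)]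
      have h2 : U (fun k => x (k + 1)) (m + 2)
          = pc (U (fun k => x (k + 1)) (m + 1) ++ [x (m + 2)]) := rfl
      rw [h2]
    · have harg : (psiW (x 1) (U (fun k => x (k + 1)) (m + 1)) ++ [x 1]) ++ [x (m + 2)]
          = psiW (x 1) (U (fun k => x (k + 1)) (m + 1) ++ [x (m + 2)]) := by
        rw [psiW_append, psiW_cons, if_neg hb, psiW_nil]
        simp
      rw [harg, pc_psiW' (x 1) (x (m + 2)) hb]
      have h2 : U (fun k => x (k + 1)) (m + 2)
          = pc (U (fun k => x (k + 1)) (m + 1) ++ [x (m + 2)]) := rfl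
      rw [h2]

lemma U_formula : ∀ n : ℕ, 1 ≤ n → ∀ x : ℕ → A, U x (n + 1) = hW x (n - 1) ++ U x n := by
  intro n
  induction n with
  | zero => omega
  | succ n ih =>
    intro _ x
    rcases Nat.eq_zero_or_pos n with rfl | hn
    · have h1 : U x 2 = pc ([] ++ [x 1]) := rfl
      rw [h1, List.nil_append, pc_singleton]
      rfl
    · rw [U_shift x (n + 1) (by omega), ih hn (fun k => x (k + 1)), psiW_append]
      have h2 := hW_shift x (n - 1)
      rw [show (fun k => x (k + 1)) = (fun k => x (k + 1)) from rfl] at h2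
      rw [h2, show n - 1 + 1 = n from by omega, List.append_assoc]
      have h3 : (n + 1) - 1 = n := rfl
      rw [h3]
      congr 1
      exact (U_shift x n hn).symm

theorem u_succ_eq_h_append (x : ℕ → A) (u : ℕ → List A) (hu1 : u 1 = [])
    (hu : ∀ n : ℕ, 1 ≤ n → IsPalClosure (u n ++ [x n]) (u (n + 1))) :
    ∀ n : ℕ, 1 ≤ n → u (n + 1) = hW x (n - 1) ++ u n := by
  have hU : ∀ m : ℕ, 1 ≤ m → u m = U x m := by
    intro m hm
    induction m, hm using Nat.le_induction with
    | base => exact hu1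
    | succ m hm ih =>
      have h1 : u (m + 1) = pc (u m ++ [x m]) := pc_eq (hu m hm)
      obtain ⟨k, rfl⟩ : ∃ k, m = k + 1 := ⟨m - 1, by omega⟩
      rw [h1, ih]
      rfl
  intro n hn
  rw [hU (n + 1) (by omega), hU n hn, U_formula n hn x]
end

section
/- Define P(n) to be the largest i < n with x_i = x_n (when it exists). If P(n) is undefined then h_{n-1} = u_n x_n, and if P(n) is defined then h_{n-1} = u_n u_{P(n)}^{-1} (i.e., u_n = h_{n-1} u_{P(n)}). -/
variable {A : Type*} [DecidableEq A]

set_option linter.unusedSectionVars false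

namespace PCAux


theorem psiW_nil (a : A) : psiW a ([] : List A) = [] := rfl

theorem psiW_cons (a c : A) (w : List A) :
    psiW a (c :: w) = (if c = a then [a] else [a, c]) ++ psiW a w := by
  simp [psiW]

theorem psiW_append (a : A) (u v : List A) :
    psiW a (u ++ v) = psiW a u ++ psiW a v := by
  simp [psiW]

theorem psiW_singleton (a c : A) :
    psiW a [c] = if c = a then [a] else [a, c] := by
  simp [psiW]

theorem psiW_eq_cons (a : A) {w : List A} (h : w ≠ []) :
    ∃ m, psiW a w = a :: m := by
  cases w with
  | nil => exact absurd rfl h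
  | cons c w =>
    rw [psiW_cons]
    by_cases hc : c = a <;> simp [hc]

theorem psiW_ne_nil (a : A) {w : List A} (h : w ≠ []) : psiW a w ≠ [] := by
  obtain ⟨m, hm⟩ := psiW_eq_cons a h
  simp [hm]

theorem psiW_rev (a : A) (w : List A) :
    (psiW a w ++ [a]).reverse = psiW a w.reverse ++ [a] := by
  induction w with
  | nil => rfl
  | cons c w ih =>
    rw [psiW_cons, List.reverse_cons, psiW_append, List.append_assoc,
      List.reverse_append]
    rw [show (psiW a w ++ [a]).reverse = ((psiW a w) ++ [a]).reverse from rfl] at ih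
    rw [show psiW a w ++ ([a] : List A) = psiW a w ++ [a] from rfl]
    -- reverse of (block ++ (psiW a w ++ [a])) = (psiW a w ++ [a]).reverse ++ block.reverse
    rw [ih, psiW_singleton]
    by_cases hc : c = a <;> simp [hc]

theorem psiW_injective (a : A) : Function.Injective (psiW a) := by
  intro u v h
  induction u generalizing v with
  | nil =>
    cases v with
    | nil => rfl
    | cons d v => exact absurd h.symm (psiW_ne_nil a (by simp))
  | cons c u ih =>
    cases v with
    | nil => exact absurd h (psiW_ne_nil a (by simp))
    | cons d v =>
      rw [psiW_cons, psiW_cons] at h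
      by_cases hc : c = a <;> by_cases hd : d = a <;> simp [hc, hd] at h
      · rw [ih h, hc, hd]
      · -- psiW a u = d :: psiW a v with d ≠ a : impossible
        exfalso
        rcases List.eq_nil_or_concat u with hu | ⟨_, _, _⟩
        · subst hu; simp [psiW_nil] at h
        · have hne : u ≠ [] := by rintro rfl; simp [psiW_nil] at h
          obtain ⟨m, hm⟩ := psiW_eq_cons a hne
          rw [hm] at h
          injection h with h1 h2
          exact hd h1.symm
      · exfalso
        have hne : v ≠ [] := by rintro rfl; simp [psiW_nil] at h
        obtain ⟨m, hm⟩ := psiW_eq_cons a hne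
        rw [hm] at h
        injection h with h1 h2
        exact hc h1
      · obtain ⟨h1, h2⟩ := h
        rw [ih h2, h1]

theorem psiW_getLast? (a : A) {w : List A} (h : w ≠ []) :
    (psiW a w).getLast? = w.getLast? := by
  induction w with
  | nil => exact absurd rfl h
  | cons c w ih =>
    cases w with
    | nil =>
      rw [psiW_cons]
      by_cases hc : c = a <;> simp [hc, psiW_nil]
    | cons d w =>
      rw [psiW_cons, List.getLast?_append, ih (by simp)]
      have : (d :: w).getLast? ≠ none := by simp [List.getLast?_eq_none_iff]
      cases hh : (d :: w).getLast? with
      | none => exact absurd hh this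
      | some y => simp [hh, List.getLast?_cons_cons]



/-- longest palindromic suffix -/
def lps : List A → List A
  | [] => []
  | c :: w => if (c :: w).reverse = c :: w then c :: w else lps w

theorem lps_suffix (w : List A) : lps w <:+ w := by
  induction w with
  | nil => exact List.suffix_refl _
  | cons c w ih =>
    rw [lps]
    split
    · exact List.suffix_refl _
    · exact ih.trans (List.suffix_cons c w)

theorem lps_pal (w : List A) : (lps w).reverse = lps w := by
  induction w with
  | nil => rfl
  | cons c w ih =>
    rw [lps]; split
    · assumption
    · exact ih

theorem lps_max {w s : List A} (hs : s <:+ w) (hp : s.reverse = s) :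
    s.length ≤ (lps w).length := by
  induction w with
  | nil => simp [List.suffix_nil.mp hs]
  | cons c w ih =>
    rw [lps]; split
    · exact hs.length_le
    · rcases List.suffix_cons_iff.mp hs with h | h
      · subst h; exact absurd hp (by assumption)
      · exact ih h

theorem lps_ne_nil {w : List A} (h : w ≠ []) : lps w ≠ [] := by
  rcases List.eq_nil_or_concat w with rfl | ⟨t, y, rfl⟩
  · exact absurd rfl h
  · have h1 : ([y] : List A).length ≤ (lps (t ++ [y])).length :=
      lps_max ⟨t, rfl⟩ (by simp)
    intro hc
    simp only [List.concat_eq_append] at hc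
    rw [hc] at h1
    simp at h1

/-- palindromic closure -/
def pc (w : List A) : List A := w ++ (w.take (w.length - (lps w).length)).reverse

theorem pc_eq (w t : List A) (h : w = t ++ lps w) :
    pc w = t ++ lps w ++ t.reverse := by
  have hl : w.length = t.length + (lps w).length := by
    nth_rewrite 1 [h]; simp
  have htake : w.take (w.length - (lps w).length) = t := by
    have h2 : w.length - (lps w).length = t.length := by omega
    rw [h2]
    nth_rewrite 1 [h]
    simp
  calc pc w = w ++ t.reverse := by rw [pc, htake]
    _ = (t ++ lps w) ++ t.reverse := by rw [← h]
    _ = t ++ lps w ++ t.reverse := by rw [List.append_assoc]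

theorem pc_decomp (w : List A) :
    ∃ t, w = t ++ lps w ∧ pc w = t ++ lps w ++ t.reverse := by
  obtain ⟨t, ht⟩ := lps_suffix w
  exact ⟨t, ht.symm, pc_eq w t ht.symm⟩

theorem pal_getElem {p : List A} (hp : p.reverse = p) {i : ℕ} (hi : i < p.length) :
    p[i] = p[p.length - 1 - i]'(by omega) := by
  have h2 : i < p.reverse.length := by simpa using hi
  have h3 := List.getElem_reverse h2
  simp only [hp] at h3
  exact h3

theorem pc_isPalClosure (w : List A) : IsPalClosure w (pc w) := by
  obtain ⟨t, hw, hpc⟩ := pc_decomp w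
  refine ⟨⟨t.reverse, by rw [hpc, ← hw]⟩, ?_, ?_⟩
  · rw [hpc, List.reverse_append, List.reverse_append, List.reverse_reverse,
      lps_pal w, List.append_assoc]
  · -- minimality
    intro q hq hqpal
    by_contra hlt
    push_neg at hlt
    have hlen : (pc w).length = 2 * w.length - (lps w).length := by
      have h1 : w.length = t.length + (lps w).length := by
        nth_rewrite 1 [hw]; simp
      rw [hpc]; simp; omega
    have hwq : w.length ≤ q.length := hq.length_le
    have h1 : w.length = t.length + (lps w).length := by
      nth_rewrite 1 [hw]; simp
    set k := q.length - w.length with hk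
    have hklt : k < t.length := by omega
    -- the suffix w.drop k is a palindrome longer than lps w
    have hsuf : w.drop k <:+ w := List.drop_suffix k w
    have hpal : (w.drop k).reverse = w.drop k := by
      apply List.ext_getElem (by simp)
      intro i hh1 hh2
      have hdl : (w.drop k).length = w.length - k := by simp
      rw [List.getElem_reverse]
      rw [List.getElem_drop, List.getElem_drop]
      simp only [List.length_drop] at hh2 ⊢
      have key : ∀ j (hj : j < w.length),
          w[j] = q[q.length - 1 - j]'(by omega) := by
        intro j hj
        rw [hq.getElem hj]
        exact pal_getElem hqpal (by omega)
      rw [key _ (by omega), hq.getElem (show k + i < w.length by omega)]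
      congr 1
      omega
    have h2 := lps_max hsuf hpal
    simp at h2
    omega

theorem palClosure_unique {w p q : List A} (h1 : IsPalClosure w p)
    (h2 : IsPalClosure w q) : p = q := by
  obtain ⟨hp1, hp2, hp3⟩ := h1
  obtain ⟨hq1, hq2, hq3⟩ := h2
  have hlen : p.length = q.length := le_antisymm (hp3 q hq1 hq2) (hq3 p hp1 hp2)
  have hb : p.length ≤ 2 * w.length := by
    have := hp3 (w ++ w.reverse) ⟨w.reverse, rfl⟩ (by simp)
    simpa [two_mul] using this
  apply List.ext_getElem hlen
  intro i hi1 hi2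
  have hwp : w.length ≤ p.length := hp1.length_le
  by_cases hiw : i < w.length
  · rw [← hp1.getElem hiw, ← hq1.getElem hiw]
  · have hj : q.length - 1 - i < w.length := by omega
    calc p[i] = p[p.length - 1 - i]'(by omega) := pal_getElem hp2 hi1
      _ = p[q.length - 1 - i]'(by omega) := by congr 1; omega
      _ = w[q.length - 1 - i]'hj := (hp1.getElem hj).symm
      _ = q[q.length - 1 - i]'(by omega) := hq1.getElem hj
      _ = q[i] := (pal_getElem hq2 hi2).symm

theorem pc_of_pal {w : List A} (h : w.reverse = w) : pc w = w := by
  have h1 : lps w = w := (lps_suffix w).eq_of_length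
    (le_antisymm (lps_suffix w).length_le (lps_max (List.suffix_refl w) h))
  rw [pc, h1]
  simp



theorem suffix_psiW {a : A} {w z : List A} (hz : z <:+ psiW a w) (hne : z ≠ []) :
    ∃ s, s <:+ w ∧ (z = psiW a s ∨ [a] ++ z = psiW a s) := by
  induction w with
  | nil =>
    rw [psiW_nil, List.suffix_nil] at hz
    exact absurd hz hne
  | cons c rest ih =>
    have hsub : psiW a rest <:+ psiW a (c :: rest) := by
      rw [psiW_cons]; exact ⟨_, rfl⟩
    rcases List.suffix_or_suffix_of_suffix hz hsub with h | h
    · obtain ⟨s, hs1, hs2⟩ := ih h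
      exact ⟨s, hs1.trans (List.suffix_cons c rest), hs2⟩
    · -- psiW a rest <:+ z
      obtain ⟨e, he⟩ := h
      obtain ⟨pre, hpre⟩ := hz
      rw [psiW_cons] at hpre
      rw [← he, ← List.append_assoc] at hpre
      have hblock : pre ++ e = (if c = a then [a] else [a, c]) :=
        List.append_cancel_right hpre
      by_cases hc : c = a
      · rw [if_pos hc] at hblock
        have he2 : e <:+ [a] := ⟨pre, hblock⟩
        rcases List.suffix_cons_iff.mp he2 with h2 | h2
        · refine ⟨c :: rest, List.suffix_refl _, Or.inl ?_⟩
          rw [← he, h2, psiW_cons, if_pos hc]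
        · rw [List.suffix_nil] at h2
          refine ⟨rest, List.suffix_cons c rest, Or.inl ?_⟩
          rw [← he, h2, List.nil_append]
      · rw [if_neg hc] at hblock
        have he2 : e <:+ [a, c] := ⟨pre, hblock⟩
        rcases List.suffix_cons_iff.mp he2 with h2 | h2
        · refine ⟨c :: rest, List.suffix_refl _, Or.inl ?_⟩
          rw [← he, h2, psiW_cons, if_neg hc]
        · rcases List.suffix_cons_iff.mp h2 with h3 | h3
          · refine ⟨c :: rest, List.suffix_refl _, Or.inr ?_⟩
            rw [← he, h3, psiW_cons, if_neg hc]
            rfl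
          · rw [List.suffix_nil] at h3
            refine ⟨rest, List.suffix_cons c rest, Or.inl ?_⟩
            rw [← he, h3, List.nil_append]


theorem lps_eq_of {w s : List A} (h1 : s <:+ w) (h2 : s.reverse = s)
    (h3 : ∀ s', s' <:+ w → s'.reverse = s' → s'.length ≤ s.length) : lps w = s := by
  have hle := lps_max h1 h2
  have hge := h3 (lps w) (lps_suffix w) (lps_pal w)
  have hlen : (lps w).length = s.length := le_antisymm hge hle
  rcases List.suffix_or_suffix_of_suffix (lps_suffix w) h1 with h | h
  · exact h.eq_of_length hlen
  · exact (h.eq_of_length hlen.symm).symm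

theorem pal_of_psiW_pal {a : A} {s : List A}
    (h : (psiW a s ++ [a]).reverse = psiW a s ++ [a]) : s.reverse = s := by
  rw [psiW_rev] at h
  exact psiW_injective a (List.append_cancel_right h)

theorem psiW_rev' (a : A) (t : List A) :
    [a] ++ (psiW a t).reverse = psiW a t.reverse ++ [a] := by
  have h := psiW_rev a t
  rw [List.reverse_append] at h
  simpa using h

theorem psiW_length_le_of_suffix_pal {a : A} {w' s : List A} (h1 : s <:+ w')
    (h2 : s.reverse = s) : (psiW a s).length ≤ (psiW a (lps w')).length := by
  have hlen : s.length ≤ (lps w').length := lps_max h1 h2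
  have hsfx : s <:+ lps w' := by
    rcases List.suffix_or_suffix_of_suffix h1 (lps_suffix w') with h | h
    · exact h
    · rw [h.eq_of_length (le_antisymm h.length_le hlen)]
  obtain ⟨pre, hpre⟩ := hsfx
  rw [← hpre, psiW_append]
  simp

theorem getLast?_of_suffix {s y : List A} (h : s <:+ y) (hne : s ≠ []) :
    y.getLast? = s.getLast? := by
  obtain ⟨pre, rfl⟩ := h
  rw [List.getLast?_append]
  cases hh : s.getLast? with
  | none => exact absurd (List.getLast?_eq_none_iff.mp hh) hne
  | some y => rfl

theorem pal_head?_eq_getLast? {s : List A} (h : s.reverse = s) :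
    s.head? = s.getLast? := by
  conv_lhs => rw [← h]
  exact List.head?_reverse

/-- K'a -/
theorem pc_psiW_of_last_ne {a : A} {w' : List A} (hne : w' ≠ [])
    (hlast : w'.getLast? ≠ some a) :
    pc (psiW a w') = psiW a (pc w') ++ [a] := by
  obtain ⟨t0, hw', hpcw'⟩ := pc_decomp w'
  have hs0ne : lps w' ≠ [] := lps_ne_nil hne
  obtain ⟨m, hm⟩ := psiW_eq_cons a hs0ne
  obtain ⟨b, hb⟩ : ∃ b, w'.getLast? = some b := by
    cases hh : w'.getLast? with
    | none => exact absurd (List.getLast?_eq_none_iff.mp hh) hne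
    | some b => exact ⟨b, rfl⟩
  have hba : b ≠ a := fun h => hlast (h ▸ hb)
  -- the decomposition of X := psiW a w'
  have hX : psiW a w' = (psiW a t0 ++ [a]) ++ m := by
    conv_lhs => rw [hw']
    rw [psiW_append, hm]
    simp
  -- m is a palindrome
  have hmpal : m.reverse = m := by
    have h1 : (psiW a (lps w') ++ [a]).reverse = psiW a (lps w') ++ [a] := by
      rw [psiW_rev, lps_pal]
    rw [hm] at h1
    have h2 : (a :: (m ++ [a])).reverse = a :: (m ++ [a]) := by
      simpa using h1
    rw [List.reverse_cons, List.reverse_append] at h2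
    have h3 : (a :: m.reverse) ++ [a] = (a :: m) ++ [a] := by simpa using h2
    have h4 := List.append_cancel_right h3
    injection h4
  -- lps (psiW a w') = m
  have hlpsX : lps (psiW a w') = m := by
    apply lps_eq_of
    · exact ⟨psiW a t0 ++ [a], hX.symm⟩
    · exact hmpal
    · intro s' hs' hs'pal
      rcases eq_or_ne s' [] with rfl | hs'ne
      · simp
      · have hlast' : s'.getLast? = some b := by
          rw [← getLast?_of_suffix hs' hs'ne, psiW_getLast? a hne, hb]
        have hhead : s'.head? = some b := by
          rw [pal_head?_eq_getLast? hs'pal, hlast']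
        obtain ⟨s'', hs''1, hs''2⟩ := suffix_psiW hs' hs'ne
        rcases hs''2 with h | h
        · exfalso
          have hs''ne : s'' ≠ [] := by rintro rfl; rw [psiW_nil] at h; exact hs'ne h
          obtain ⟨m', hm'⟩ := psiW_eq_cons a hs''ne
          rw [h, hm'] at hhead
          simp at hhead
          exact hba hhead.symm
        · -- [a] ++ s' = psiW a s''
          have hpal2 : (psiW a s'' ++ [a]).reverse = psiW a s'' ++ [a] := by
            rw [← h]
            simp [List.reverse_append, hs'pal]
          have hs''pal := pal_of_psiW_pal hpal2
          have hlen := psiW_length_le_of_suffix_pal (a := a) hs''1 hs''pal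
          have h5 : (psiW a s'').length = s'.length + 1 := by
            rw [← h]; simp
          rw [hm] at hlen
          simp at hlen
          omega
  -- now compute pc
  have hpc := pc_eq (psiW a w') (psiW a t0 ++ [a]) (by rw [hlpsX]; exact hX)
  rw [hpc, hlpsX, hpcw']
  rw [List.reverse_append, psiW_append, psiW_append, hm]
  have hrev : ([a] : List A).reverse = [a] := by simp
  rw [hrev]
  have h6 := psiW_rev' a t0
  simp only [List.append_assoc] at *
  rw [← h6]
  simp

/-- K'b -/
theorem pc_psiW_append_a {a : A} {w' : List A} (hne : w' ≠ []) :
    pc (psiW a w' ++ [a]) = psiW a (pc w') ++ [a] := by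
  obtain ⟨t0, hw', hpcw'⟩ := pc_decomp w'
  have hs0ne : lps w' ≠ [] := lps_ne_nil hne
  have hX : psiW a w' ++ [a] = psiW a t0 ++ (psiW a (lps w') ++ [a]) := by
    conv_lhs => rw [hw']
    rw [psiW_append]
    simp
  have hcandpal : (psiW a (lps w') ++ [a]).reverse = psiW a (lps w') ++ [a] := by
    rw [psiW_rev, lps_pal]
  have hlpsX : lps (psiW a w' ++ [a]) = psiW a (lps w') ++ [a] := by
    apply lps_eq_of
    · exact ⟨psiW a t0, hX.symm⟩
    · exact hcandpal
    · intro s' hs' hs'pal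
      rcases eq_or_ne s' [] with rfl | hs'ne
      · simp
      · -- s' = z ++ [a] with z <:+ psiW a w'
        obtain ⟨pre, hpre⟩ := hs'
        obtain ⟨z, rfl⟩ : ∃ z, s' = z ++ [a] := by
          rcases List.eq_nil_or_concat s' with rfl | ⟨z, y, hzy⟩
          · exact absurd rfl hs'ne
          · refine ⟨z, ?_⟩
            subst hzy
            have h1 : y = a := by
              have h2 := congrArg List.getLast? hpre
              rw [List.concat_eq_append] at h2
              simp only [List.getLast?_append] at h2
              simpa using h2
            rw [List.concat_eq_append, h1]
        have hz : z <:+ psiW a w' := by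
          refine ⟨pre, ?_⟩
          have h3 := hpre
          rw [← List.append_assoc] at h3
          exact List.append_cancel_right h3
        -- bound : need (z ++ [a]).length ≤ (psiW a (lps w')).length + 1
        suffices hzz : z.length ≤ (psiW a (lps w')).length by
          simp at hzz ⊢; omega
        rcases eq_or_ne z [] with rfl | hzne
        · simp
        · have hheadz : z.head? = some a := by
            have h1 : (z ++ [a]).getLast? = some a := by
              rw [List.getLast?_append]; rfl
            have h2 := pal_head?_eq_getLast? hs'pal
            rw [h1] at h2
            rw [← h2, List.head?_append_of_ne_nil _ hzne]
          obtain ⟨s'', hs''1, hs''2⟩ := suffix_psiW hz hzne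
          -- reduce the second case to the first
          have hcase : ∃ s3, s3 <:+ w' ∧ z = psiW a s3 := by
            rcases hs''2 with h | h
            · exact ⟨s'', hs''1, h⟩
            · have hs''ne : s'' ≠ [] := by
                rintro rfl; rw [psiW_nil] at h; simp at h
              cases s'' with
              | nil => exact absurd rfl hs''ne
              | cons c rest =>
                rw [psiW_cons] at h
                by_cases hc : c = a
                · rw [if_pos hc] at h
                  refine ⟨rest, (List.suffix_cons c rest).trans hs''1, ?_⟩
                  simpa using h
                · rw [if_neg hc] at h
                  exfalso
                  have h4 : z = c :: psiW a rest := by simpa using h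
                  rw [h4] at hheadz
                  simp at hheadz
                  exact hc hheadz
          obtain ⟨s3, hs3, rfl⟩ := hcase
          have hpal3 : (psiW a s3 ++ [a]).reverse = psiW a s3 ++ [a] := hs'pal
          have hs3pal := pal_of_psiW_pal hpal3
          exact psiW_length_le_of_suffix_pal hs3 hs3pal
  have hpc := pc_eq (psiW a w' ++ [a]) (psiW a t0) (by rw [hlpsX]; exact hX)
  rw [hpc, hlpsX, hpcw']
  rw [psiW_append, psiW_append]
  have h6 := psiW_rev' a t0
  simp only [List.append_assoc] at *
  rw [← h6]


def shf (x : ℕ → A) : ℕ → A := fun i => x (i + 1)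

theorem muW_shift (x : ℕ → A) : ∀ (n : ℕ) (w : List A),
    muW x (n + 1) w = psiW (x 1) (muW (shf x) n w)
  | 0, w => rfl
  | n + 1, w => by
    show muW x (n + 1) (psiW (x (n + 2)) w) = _
    rw [muW_shift x n (psiW (x (n + 2)) w)]
    rfl

theorem hW_shift (x : ℕ → A) (n : ℕ) : hW x (n + 1) = psiW (x 1) (hW (shf x) n) := by
  rw [hW, hW, muW_shift]
  rfl

def palSeq (x : ℕ → A) : ℕ → List A
  | 0 => []
  | n + 1 => pc (palSeq x n ++ [x (n + 1)])

theorem palSeq_shift (x : ℕ → A) (n : ℕ) :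
    palSeq x (n + 1) = psiW (x 1) (palSeq (shf x) n) ++ [x 1] := by
  induction n with
  | zero =>
    show pc ([] ++ [x 1]) = psiW (x 1) [] ++ [x 1]
    rw [List.nil_append, psiW_nil, List.nil_append]
    exact pc_of_pal (by simp)
  | succ n ih =>
    show pc (palSeq x (n + 1) ++ [x (n + 2)]) = _
    rw [ih]
    by_cases hb : x (n + 2) = x 1
    · have harg : (psiW (x 1) (palSeq (shf x) n) ++ [x 1]) ++ [x (n + 2)]
          = psiW (x 1) (palSeq (shf x) n ++ [x (n + 2)]) ++ [x 1] := by
        rw [psiW_append, psiW_singleton, if_pos hb, hb]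
        try simp
      rw [harg, pc_psiW_append_a (by simp)]
      rfl
    · have harg : (psiW (x 1) (palSeq (shf x) n) ++ [x 1]) ++ [x (n + 2)]
          = psiW (x 1) (palSeq (shf x) n ++ [x (n + 2)]) := by
        rw [psiW_append, psiW_singleton, if_neg hb]
        simp
      rw [harg, pc_psiW_of_last_ne (by simp)
        (by rw [List.getLast?_append]; simp [hb])]
      rfl

theorem M1 : ∀ (m : ℕ) (x : ℕ → A),
    (∀ i : ℕ, 1 ≤ i → i ≤ m → x i ≠ x (m + 1)) →
    hW x m = palSeq x m ++ [x (m + 1)] := by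
  intro m
  induction m with
  | zero => intro x _; rfl
  | succ m ih =>
    intro x hx
    have hx' : ∀ i : ℕ, 1 ≤ i → i ≤ m → shf x i ≠ shf x (m + 1) := by
      intro i h1 h2
      exact hx (i + 1) (by omega) (by omega)
    have h1 := ih (shf x) hx'
    rw [hW_shift, h1, psiW_append, psiW_singleton]
    have hne : shf x (m + 1) ≠ x 1 := by
      have := hx 1 le_rfl (by omega)
      show x (m + 2) ≠ x 1
      exact fun h => this h.symm
    rw [if_neg hne, palSeq_shift]
    show psiW (x 1) (palSeq (shf x) m) ++ ([x 1] ++ [x (m + 2)]) = _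
    simp

theorem M2 : ∀ (m : ℕ) (x : ℕ → A) (p : ℕ), 1 ≤ p → p ≤ m → x p = x (m + 1) →
    (∀ i : ℕ, p < i → i ≤ m → x i ≠ x (m + 1)) →
    palSeq x m = hW x m ++ palSeq x (p - 1) := by
  intro m
  induction m with
  | zero => intro x p h1 h2; omega
  | succ m ih =>
    intro x p h1 h2 hxp hgap
    rcases eq_or_lt_of_le h1 with rfl | hp2
    · -- p = 1 : x 1 = x (m + 2); fresh letter for shifted word
      have hx' : ∀ i : ℕ, 1 ≤ i → i ≤ m → shf x i ≠ shf x (m + 1) := by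
        intro i hi1 hi2
        exact hgap (i + 1) (by omega) (by omega)
      have h1' := M1 m (shf x) hx'
      rw [palSeq_shift, hW_shift, h1', psiW_append, psiW_singleton]
      have : shf x (m + 1) = x 1 := hxp.symm
      rw [if_pos this]
      simp [palSeq]
    · -- p ≥ 2
      have ih' := ih (shf x) (p - 1) (by omega) (by omega)
        (by show x (p - 1 + 1) = x (m + 2); rw [Nat.sub_add_cancel h1]; exact hxp)
        (by intro i hi1 hi2; exact hgap (i + 1) (by omega) (by omega))
      rw [palSeq_shift, hW_shift, ih', psiW_append]
      have hp : p - 1 = (p - 2) + 1 := by omega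
      rw [hp, palSeq_shift]
      simp only [Nat.add_sub_cancel]
      rw [List.append_assoc]


theorem u_eq_palSeq (x : ℕ → A) (u : ℕ → List A) (hu1 : u 1 = [])
    (hu : ∀ n : ℕ, 1 ≤ n → IsPalClosure (u n ++ [x n]) (u (n + 1))) :
    ∀ k : ℕ, u (k + 1) = palSeq x k := by
  intro k
  induction k with
  | zero => exact hu1
  | succ k ih =>
    have h1 := hu (k + 1) (by omega)
    rw [ih] at h1
    exact palClosure_unique h1 (pc_isPalClosure (palSeq x k ++ [x (k + 1)]))

end PCAux

theorem h_eq_u_formula (x : ℕ → A) (u : ℕ → List A) (hu1 : u 1 = [])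
    (hu : ∀ n : ℕ, 1 ≤ n → IsPalClosure (u n ++ [x n]) (u (n + 1))) (n : ℕ) (hn : 1 ≤ n) :
    ((∀ i : ℕ, 1 ≤ i → i < n → x i ≠ x n) → hW x (n - 1) = u n ++ [x n]) ∧
    (∀ p : ℕ, 1 ≤ p → p < n → x p = x n → (∀ i : ℕ, p < i → i < n → x i ≠ x n) →
      u n = hW x (n - 1) ++ u p) := by
  obtain ⟨m, rfl⟩ : ∃ m, n = m + 1 := ⟨n - 1, by omega⟩
  have hu' := PCAux.u_eq_palSeq x u hu1 hu
  constructor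
  · intro hfresh
    have h1 := PCAux.M1 m x (fun i hi1 hi2 => hfresh i hi1 (by omega))
    rw [show m + 1 - 1 = m from rfl, h1, hu' m]
  · intro p hp1 hp2 hxp hgap
    have h2 := PCAux.M2 m x p hp1 (by omega) hxp
      (fun i hi1 hi2 => hgap i hi1 (by omega))
    rw [show m + 1 - 1 = m from rfl, hu' m, h2]
    congr 1
    rw [← hu' (p - 1), show p - 1 + 1 = p from by omega]
end

section
/- If P(n) is defined (i.e., the letter x_n occurs at some earlier position in the directive word, with P(n) the largest such position), then h_{n-1} = h_{n-2} h_{n-3} ⋯ h_{P(n)-1}. -/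
variable {A : Type*} [DecidableEq A]

lemma muW_append (x : ℕ → A) (k : ℕ) (u v : List A) :
    muW x k (u ++ v) = muW x k u ++ muW x k v := by
  induction k generalizing u v with
  | zero => rfl
  | succ k ih => simp [muW, psiW_append, ih]

lemma muW_key (x : ℕ → A) (n p : ℕ) (hp1 : 1 ≤ p) (hpn : p < n) (hpx : x p = x n)
    (hmax : ∀ i : ℕ, p < i → i < n → x i ≠ x n) :
    ∀ m : ℕ, p + m ≤ n - 1 →
      muW x (p + m) [x n] = ((List.range' (p - 1) (m + 1)).reverse.map (hW x)).flatten := by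
  intro m
  induction m with
  | zero =>
    intro _
    have hp : p - 1 + 1 = p := Nat.succ_pred_eq_of_pos hp1
    have h1 : muW x (p - 1 + 1) [x n] = hW x (p - 1) := by
      simp only [muW]
      rw [hp]
      have : psiW (x p) [x n] = [x (p - 1 + 1)] := by
        simp [psiW, hpx.symm, hp]
      rw [this]
      rfl
    rw [Nat.add_zero, ← hp, h1]
    simp
  | succ m ih =>
    intro hle
    have hle' : p + m ≤ n - 1 := by omega
    have hne : x (p + m + 1) ≠ x n := hmax _ (by omega) (by omega)
    have : p + (m + 1) = (p + m) + 1 := by omega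
    rw [this]
    show muW x (p + m) (psiW (x (p + m + 1)) [x n]) = _
    have h2 : psiW (x (p + m + 1)) [x n] = [x (p + m + 1)] ++ [x n] := by
      have hne' : ¬ x n = x (p + m + 1) := fun h => hne h.symm
      simp only [psiW, List.flatMap_cons, List.flatMap_nil, if_neg hne']
      rfl
    rw [h2, muW_append, ih hle']
    have h3 : List.range' (p - 1) (m + 1 + 1) = List.range' (p - 1) (m + 1) ++ [p + m] := by
      rw [List.range'_concat]
      congr 2
      omega
    rw [h3]
    simp [hW]

theorem h_eq_prod_of_P_defined (x : ℕ → A) (n p : ℕ) (hp1 : 1 ≤ p)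
    (hpn : p < n) (hpx : x p = x n)
    (hmax : ∀ i : ℕ, p < i → i < n → x i ≠ x n) :
    hW x (n - 1) = ((List.range' (p - 1) (n - p)).reverse.map (hW x)).flatten := by
  have h1 : hW x (n - 1) = muW x (n - 1) [x n] := by
    have : n - 1 + 1 = n := by omega
    rw [hW, this]
  have h2 := muW_key x n p hp1 hpn hpx hmax (n - 1 - p) (by omega)
  have h3 : p + (n - 1 - p) = n - 1 := by omega
  have h4 : n - 1 - p + 1 = n - p := by omega
  rw [h1, ← h3, h2, h4]
end

section
/- Suppose the letter x_n occurs at some earlier position in the directive word. Then h_{n-1} is a prefix of u_n and \bar{h_{n-1}} (the reversal of h_{n-1}) is a suffix of u_n. -/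
variable {A : Type*} [DecidableEq A]

set_option linter.unusedSectionVars false

namespace PalDev


@[simp] lemma psiW_nil (a : A) : psiW a [] = [] := rfl

lemma psiW_cons (a c : A) (l : List A) :
    psiW a (c :: l) = (if c = a then [a] else [a, c]) ++ psiW a l := by
  simp [psiW]

lemma psiW_append (a : A) (x y : List A) : psiW a (x ++ y) = psiW a x ++ psiW a y :=
  List.flatMap_append ..

lemma psiW_eq_nil_iff (a : A) (l : List A) : psiW a l = [] ↔ l = [] := by
  cases l with
  | nil => simp
  | cons c t => rw [psiW_cons]; split <;> simp

lemma psiW_cons_head (a : A) (l : List A) (h : l ≠ []) :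
    ∃ t, psiW a l = a :: t := by
  cases l with
  | nil => simp at h
  | cons c t => rw [psiW_cons]; split <;> exact ⟨_, rfl⟩

lemma psiW_length_add_count (a : A) (l : List A) :
    (psiW a l).length + l.count a = 2 * l.length := by
  induction l with
  | nil => simp
  | cons c t ih =>
    rw [psiW_cons, List.length_append, List.count_cons]
    by_cases h : c = a <;> simp [h] <;> omega

lemma psiW_injective (a : A) : Function.Injective (psiW a) := by
  intro x
  induction x with
  | nil => intro y h; cases y with
    | nil => rfl
    | cons d t => rw [psiW_cons] at h; split at h <;> simp at h
  | cons c t ih =>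
    intro y h
    cases y with
    | nil => rw [psiW_cons] at h; split at h <;> simp at h
    | cons d s =>
      rw [psiW_cons, psiW_cons] at h
      by_cases hc : c = a <;> by_cases hd : d = a <;> simp [hc, hd] at h
      · rw [hc, hd, ih h]
      · exfalso
        cases t with
        | nil => simp at h
        | cons e t' =>
          obtain ⟨z, hz⟩ := psiW_cons_head a (e :: t') (by simp)
          rw [hz] at h
          exact hd (List.cons.injEq .. ▸ h).1.symm
      · exfalso
        cases s with
        | nil => simp at h
        | cons e s' =>
          obtain ⟨z, hz⟩ := psiW_cons_head a (e :: s') (by simp)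
          rw [hz] at h
          exact hc (List.cons.injEq .. ▸ h).1
      · obtain ⟨rfl, h2⟩ := h
        rw [ih h2]

lemma psiW_reverse (a : A) (l : List A) :
    (psiW a l ++ [a]).reverse = psiW a l.reverse ++ [a] := by
  induction l with
  | nil => simp
  | cons c t ih =>
    rw [psiW_cons, List.reverse_cons, psiW_append, List.append_assoc, List.reverse_append, ih]
    by_cases h : c = a <;> simp [h, psiW_cons]



/-- length of the longest palindromic suffix -/
noncomputable def palSuffLen (w : List A) : ℕ :=
  Nat.findGreatest (fun k => (w.drop (w.length - k)).reverse = w.drop (w.length - k)) w.length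

lemma palSuffLen_le (w : List A) : palSuffLen w ≤ w.length := Nat.findGreatest_le _

lemma palSuffLen_spec (w : List A) :
    (w.drop (w.length - palSuffLen w)).reverse = w.drop (w.length - palSuffLen w) := by
  classical
  exact Nat.findGreatest_spec (P := fun k => (w.drop (w.length - k)).reverse = w.drop (w.length - k))
    (Nat.zero_le _) (by simp)

lemma le_palSuffLen (w : List A) (k : ℕ) (hk : k ≤ w.length)
    (h : (w.drop (w.length - k)).reverse = w.drop (w.length - k)) : k ≤ palSuffLen w :=
  Nat.le_findGreatest hk h

/-- any palindrome with prefix w has length ≥ 2|w| - palSuffLen w -/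
lemma pal_len_lower (w s : List A) (hpre : w <+: s) (hpal : s.reverse = s) :
    2 * w.length ≤ s.length + palSuffLen w := by
  rcases le_or_gt (2 * w.length) s.length with h | h
  · omega
  · have hws : w.length ≤ s.length := hpre.length_le
    set k := 2 * w.length - s.length with hk
    have hkw : k ≤ w.length := by omega
    obtain ⟨e, he⟩ := hpre
    have hlen_e : w.length + e.length = s.length := by rw [← he]; simp
    have hm : e.length ≤ w.length := by omega
    have hrev : w ++ e = e.reverse ++ w.reverse := by
      calc w ++ e = s := he
      _ = s.reverse := hpal.symm
      _ = e.reverse ++ w.reverse := by rw [← he, List.reverse_append]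
    have hw' : w = e.reverse ++ w.reverse.take (w.length - e.length) := by
      have := congrArg (List.take w.length) hrev
      rw [List.take_left, List.take_append,
        List.take_of_length_le (by simpa using hm), List.length_reverse] at this
      exact this
    have hdrop : w.drop e.length = w.reverse.take (w.length - e.length) := by
      conv_lhs => rw [hw']
      rw [List.drop_append, List.drop_of_length_le (by simp),
        List.length_reverse]
      simp
    have hpalsuf : (w.drop e.length).reverse = w.drop e.length := by
      conv_lhs => rw [hdrop]
      rw [List.take_reverse, List.reverse_reverse]
      congr 1
      omega
    have hkd : w.length - k = e.length := by omega
    have : k ≤ palSuffLen w := le_palSuffLen w k hkw (by rw [hkd]; exact hpalsuf)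
    omega

/-- a palindrome with prefix w of length ≤ 2|w| is determined by its length -/
lemma pal_determined (w p : List A) (hpre : w <+: p) (hpal : p.reverse = p)
    (hle : p.length ≤ 2 * w.length) :
    p = w ++ (w.take (p.length - w.length)).reverse := by
  obtain ⟨e, he⟩ := hpre
  have hlen_e : w.length + e.length = p.length := by rw [← he]; simp
  have hel : e.length = p.length - w.length := by omega
  have hm : e.length ≤ w.length := by omega
  have hrev : w ++ e = e.reverse ++ w.reverse := by
    calc w ++ e = p := he
    _ = p.reverse := hpal.symm
    _ = e.reverse ++ w.reverse := by rw [← he, List.reverse_append]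
  have he2 : e = w.reverse.drop (w.length - e.length) := by
    have := congrArg (List.drop w.length) hrev
    rw [List.drop_left, List.drop_append,
      List.drop_of_length_le (by simpa using hm), List.nil_append, List.length_reverse] at this
    exact this
  have hed : e = (w.take e.length).reverse := by
    have h9 : w.length - (w.length - e.length) = e.length := by omega
    conv_lhs => rw [he2]
    rw [List.drop_reverse, h9]
  conv_lhs => rw [← he, hed]
  rw [hel]

lemma isPalClosure_length_le {w p : List A}
    (h : w <+: p ∧ p.reverse = p ∧ ∀ q : List A, w <+: q → q.reverse = q → p.length ≤ q.length) :
    p.length ≤ 2 * w.length := by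
  have h2 := h.2.2 (w ++ w.reverse) (List.prefix_append ..) (by simp)
  simp at h2
  omega

lemma isPalClosure_unique {w p q : List A}
    (hp : w <+: p ∧ p.reverse = p ∧ ∀ r : List A, w <+: r → r.reverse = r → p.length ≤ r.length)
    (hq : w <+: q ∧ q.reverse = q ∧ ∀ r : List A, w <+: r → r.reverse = r → q.length ≤ r.length) :
    p = q := by
  have hlen : p.length = q.length :=
    le_antisymm (hp.2.2 q hq.1 hq.2.1) (hq.2.2 p hp.1 hp.2.1)
  rw [pal_determined w p hp.1 hp.2.1 (isPalClosure_length_le hp),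
    pal_determined w q hq.1 hq.2.1 (isPalClosure_length_le hq), hlen]



/-- structure of suffixes of ψ_a(w) -/
lemma psiW_suffix (a : A) (w s : List A) (h : s <:+ psiW a w) :
    (∃ t, t <:+ w ∧ s = psiW a t) ∨ (∃ c t, c ≠ a ∧ (c :: t) <:+ w ∧ s = c :: psiW a t) := by
  induction w with
  | nil =>
    left
    exact ⟨[], List.nil_suffix, by simpa [psiW] using List.eq_nil_of_suffix_nil (by simpa [psiW] using h)⟩
  | cons d w' ih =>
    rw [psiW_cons] at h
    by_cases hd : d = a
    · rw [if_pos hd] at h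
      rw [List.singleton_append, List.suffix_cons_iff] at h
      rcases h with rfl | h
      · left
        exact ⟨d :: w', List.suffix_refl _, by rw [psiW_cons, if_pos hd]; rfl⟩
      · rcases ih h with ⟨t, ht, rfl⟩ | ⟨c, t, hc, ht, rfl⟩
        · exact Or.inl ⟨t, ht.trans (List.suffix_cons _ _), rfl⟩
        · exact Or.inr ⟨c, t, hc, ht.trans (List.suffix_cons _ _), rfl⟩
    · rw [if_neg hd] at h
      have : s <:+ a :: d :: psiW a w' := by simpa using h
      rw [List.suffix_cons_iff] at this
      rcases this with rfl | this
      · left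
        refine ⟨d :: w', List.suffix_refl _, ?_⟩
        rw [psiW_cons, if_neg hd]
        rfl
      · rw [List.suffix_cons_iff] at this
        rcases this with rfl | this
        · exact Or.inr ⟨d, w', hd, List.suffix_refl _, rfl⟩
        · rcases ih this with ⟨t, ht, rfl⟩ | ⟨c, t, hc, ht, rfl⟩
          · exact Or.inl ⟨t, ht.trans (List.suffix_cons _ _), rfl⟩
          · exact Or.inr ⟨c, t, hc, ht.trans (List.suffix_cons _ _), rfl⟩

lemma psiW_concat (a d : A) (t0 : List A) :
    ∃ z, psiW a (t0 ++ [d]) = z ++ [d] := by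
  rw [psiW_append]
  by_cases hd : d = a
  · exact ⟨psiW a t0, by simp [psiW, hd]⟩
  · exact ⟨psiW a t0 ++ [a], by simp [psiW, hd]⟩

lemma suffix_concat_nonempty {s l : List A} {a : A} (h : s <:+ l ++ [a]) (hs : s ≠ []) :
    ∃ s0, s0 <:+ l ∧ s = s0 ++ [a] := by
  obtain ⟨t, ht⟩ := h
  rcases List.eq_nil_or_concat s with rfl | ⟨s0, d, rfl⟩
  · exact absurd rfl hs
  · rw [List.concat_eq_append, ← List.append_assoc] at ht
    obtain ⟨h1, h2⟩ := List.append_inj' ht rfl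
    simp at h2
    subst h2
    exact ⟨s0, ⟨t, h1⟩, by simp⟩


lemma psiW_singleton (a b : A) : psiW a [b] = if b = a then [a] else [a, b] := by
  simp [psiW]

lemma psiW_length_reverse (a : A) (l : List A) :
    (psiW a l.reverse).length = (psiW a l).length := by
  have h1 := psiW_length_add_count a l.reverse
  have h2 := psiW_length_add_count a l
  rw [List.count_reverse, List.length_reverse] at h1
  omega

lemma pal_of_psiW_pal (a : A) (t : List A)
    (h : (psiW a t ++ [a]).reverse = psiW a t ++ [a]) : t.reverse = t := by
  rw [psiW_reverse] at h
  exact psiW_injective a (List.append_cancel_right h)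

/-- step B : among palindromes with prefix `w`, the ψ-image length is minimized
at the palindromic closure -/
lemma stepB (a : A) {w r C : List A} (hr : IsPalClosure w r)
    (hC1 : w <+: C) (hC2 : C.reverse = C) (hC3 : C.length ≤ 2 * w.length) :
    (psiW a r).length ≤ (psiW a C).length := by
  obtain ⟨hr1, hr2, hr3⟩ := hr
  have hrC : r.length ≤ C.length := hr3 C hC1 hC2
  have hrlen : r.length ≤ 2 * w.length := isPalClosure_length_le ⟨hr1, hr2, hr3⟩
  have hwr : w.length ≤ r.length := hr1.length_le
  have hwC : w.length ≤ C.length := hC1.length_le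
  set mr := r.length - w.length with hmr
  set mc := C.length - w.length with hmc
  have hmrw : mr ≤ w.length := by omega
  have hmcw : mc ≤ w.length := by omega
  have hreq : r = w ++ (w.take mr).reverse := pal_determined w r hr1 hr2 hrlen
  have hCeq : C = w ++ (w.take mc).reverse := pal_determined w C hC1 hC2 hC3
  have hcount_r : r.count a = w.count a + (w.take mr).count a := by
    rw [hreq, List.count_append, List.count_reverse]
  have hcount_C : C.count a = w.count a + (w.take mc).count a := by
    rw [hCeq, List.count_append, List.count_reverse]
  have hsplit : w.take mc = w.take mr ++ (w.take mc).drop mr := by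
    conv_lhs => rw [← List.take_append_drop mr (w.take mc)]
    congr 1
    rw [List.take_take]
    congr 1
    omega
  have hcc : (w.take mc).count a ≤ (w.take mr).count a + (mc - mr) := by
    conv_lhs => rw [hsplit]
    rw [List.count_append]
    have := (List.count_le_length : List.count a ((w.take mc).drop mr) ≤ _)
    have hlen : ((w.take mc).drop mr).length ≤ mc - mr := by
      simp
      omega
    omega
  have h1 := psiW_length_add_count a r
  have h2 := psiW_length_add_count a C
  have hrl : r.length = w.length + mr := by omega
  have hCl : C.length = w.length + mc := by omega
  have hmrc : mr ≤ mc := by omega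
  omega

lemma exists_maximal_pal_suffix (W : List A) :
    ∃ P, P <:+ W ∧ P.reverse = P ∧ P.length = palSuffLen W := by
  refine ⟨W.drop (W.length - palSuffLen W), List.drop_suffix _ _, palSuffLen_spec W, ?_⟩
  have := palSuffLen_le W
  simp
  omega

lemma crux (a b : A) (v r : List A) (hr : IsPalClosure (v ++ [b]) r) :
    IsPalClosure (psiW a v ++ [a, b]) (psiW a r ++ [a]) := by
  obtain ⟨hr1, hr2, hr3⟩ := hr
  obtain ⟨t, ht⟩ := hr1
  have hrsplit : psiW a r = psiW a v ++ psiW a [b] ++ psiW a t := by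
    rw [← ht, psiW_append, psiW_append]
  -- prefix
  have hpre : psiW a v ++ [a, b] <+: psiW a r ++ [a] := by
    by_cases hb : b = a
    · subst hb
      rw [psiW_singleton, if_pos rfl] at hrsplit
      rcases List.eq_nil_or_concat t with rfl | ⟨t0, d, rfl⟩
      · refine ⟨[], ?_⟩
        rw [hrsplit]
        simp
      · obtain ⟨z, hz⟩ := psiW_cons_head b (t0.concat d) (by simp)
        refine ⟨z ++ [b], ?_⟩
        rw [hrsplit, hz]
        simp
    · rw [psiW_singleton, if_neg hb] at hrsplit
      refine ⟨psiW a t ++ [a], ?_⟩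
      rw [hrsplit]
      simp
  -- palindrome
  have hpal : (psiW a r ++ [a]).reverse = psiW a r ++ [a] := by
    rw [psiW_reverse, hr2]
  refine ⟨hpre, hpal, ?_⟩
  intro s hs hspal
  -- KEY inequality
  obtain ⟨P, hPsuf, hPpal, hPlen⟩ := exists_maximal_pal_suffix (psiW a v ++ [a, b])
  have hWcat : psiW a v ++ [a, b] = (psiW a v ++ [a]) ++ [b] := by simp
  have hKEY : (psiW a r).length + 1 + palSuffLen (psiW a v ++ [a, b]) ≤
      2 * (psiW a v ++ [a, b]).length := by
    by_cases hb : b = a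
    · subst hb
      have hWf : psiW b v ++ [b, b] = psiW b (v ++ [b]) ++ [b] := by
        rw [psiW_append, psiW_singleton, if_pos rfl]
        simp
      rcases eq_or_ne P [] with rfl | hPne
      · have hG0 : palSuffLen (psiW b v ++ [b, b]) = 0 := by simpa using hPlen.symm
        have hC := stepB b (w := v ++ [b]) (r := r) ⟨⟨t, ht⟩, hr2, hr3⟩
          (C := (v ++ [b]) ++ (v ++ [b]).reverse)
          (List.prefix_append _ _) (by simp) (by simp; omega)
        have hClen : (psiW b ((v ++ [b]) ++ (v ++ [b]).reverse)).length
            = 2 * (psiW b (v ++ [b])).length := by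
          rw [psiW_append, List.length_append, psiW_length_reverse]
          ring
        have hWlen : (psiW b v ++ [b, b]).length = (psiW b (v ++ [b])).length + 1 := by
          rw [hWf]
          simp
        omega
      · obtain ⟨P0, hP0suf, hP0⟩ := suffix_concat_nonempty (hWf ▸ hPsuf) hPne
        rcases psiW_suffix b (v ++ [b]) P0 hP0suf with ⟨tt, htsuf, rfl⟩ | ⟨c, tt, hca, hct, rfl⟩
        · -- P = psiW b tt ++ [b]
          have htpal : tt.reverse = tt := pal_of_psiW_pal b tt (by rw [← hP0]; exact hPpal)
          obtain ⟨t', ht'⟩ := htsuf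
          have hCpal : ((v ++ [b]) ++ t'.reverse).reverse = (v ++ [b]) ++ t'.reverse := by
            rw [← ht', List.reverse_append, List.reverse_append, List.reverse_reverse,
              htpal, List.append_assoc]
          have hC := stepB b (w := v ++ [b]) (r := r) ⟨⟨t, ht⟩, hr2, hr3⟩
            (C := (v ++ [b]) ++ t'.reverse)
            (List.prefix_append _ _) hCpal
            (by
              have := congrArg List.length ht'
              simp at this ⊢
              omega)
          have h1 : (psiW b ((v ++ [b]) ++ t'.reverse)).length =
              (psiW b (v ++ [b])).length + (psiW b t').length := by
            rw [psiW_append, List.length_append, psiW_length_reverse]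
          have h2 : (psiW b (v ++ [b])).length = (psiW b t').length + (psiW b tt).length := by
            rw [← ht', psiW_append, List.length_append]
          have hWlen : (psiW b v ++ [b, b]).length = (psiW b (v ++ [b])).length + 1 := by
            rw [hWf]; simp
          have hG : palSuffLen (psiW b v ++ [b, b]) = (psiW b tt).length + 1 := by
            rw [← hPlen, hP0]
            simp
          omega
        · -- P = (c :: psiW b tt) ++ [b], c ≠ b : palindrome contradiction
          exfalso
          have h1 : ((c :: psiW b tt) ++ [b]).reverse = b :: ((psiW b tt).reverse ++ [c]) := by
            simp
          have h2 := hPpal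
          have hP0' : P = (c :: psiW b tt) ++ [b] := by rw [hP0]
          rw [hP0', h1] at h2
          exact hca ((List.cons_eq_cons.mp h2).1).symm
    · have hWf : psiW a v ++ [a, b] = psiW a (v ++ [b]) := by
        rw [psiW_append, psiW_singleton, if_neg hb]
      have hG1 : 1 ≤ palSuffLen (psiW a v ++ [a, b]) := by
        apply le_palSuffLen _ 1 (by simp)
        have hd : (psiW a v ++ [a, b]).drop ((psiW a v ++ [a, b]).length - 1) = [b] := by
          rw [hWcat]
          have hl : ((psiW a v ++ [a]) ++ [b]).length - 1 = (psiW a v ++ [a]).length := by simp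
          rw [hl, List.drop_left]
        rw [hd]
        rfl
      have hPne : P ≠ [] := by
        intro h
        rw [h] at hPlen
        simp at hPlen
        omega
      obtain ⟨P1, hP1suf, hP1⟩ := suffix_concat_nonempty (hWcat ▸ hPsuf) hPne
      rcases psiW_suffix a (v ++ [b]) P (hWf ▸ hPsuf) with ⟨tt, htsuf, hP0⟩ | ⟨c, tt, hca, hct, hP0⟩
      · -- P = psiW a tt : starts with a, ends with b ≠ a : contradiction
        exfalso
        have httne : tt ≠ [] := by
          rintro rfl
          rw [hP0] at hPne
          exact hPne rfl
        obtain ⟨z, hz⟩ := psiW_cons_head a tt httne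
        have h2 := hPpal
        rw [hP1] at h2
        have h3 : (P1 ++ [b]).reverse = b :: P1.reverse := by simp
        rw [h3] at h2
        have h4 : P1 ++ [b] = a :: z := by rw [← hP1, hP0, hz]
        rw [h4] at h2
        exact hb (List.cons_eq_cons.mp h2).1
      · rcases List.eq_nil_or_concat tt with rfl | ⟨t0, d, htt⟩
        · -- P = [c] and c = b
          have hPc : P = [c] := by simpa [psiW] using hP0
          have hcb : c = b := by
            have h5 : [c] = P1 ++ [b] := by rw [← hPc, hP1]
            cases P1 with
            | nil => simpa using h5
            | cons e P2 =>
              have := congrArg List.length h5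
              simp at this
          have hC := stepB a (w := v ++ [b]) (r := r) ⟨⟨t, ht⟩, hr2, hr3⟩
            (C := (v ++ [b]) ++ v.reverse)
            (List.prefix_append _ _) (by simp) (by simp; omega)
          have hClen : (psiW a ((v ++ [b]) ++ v.reverse)).length
              = 2 * (psiW a v).length + 2 := by
            rw [psiW_append, List.length_append, psiW_length_reverse, psiW_append,
              List.length_append, psiW_singleton, if_neg hb]
            simp
            ring
          have hG : palSuffLen (psiW a v ++ [a, b]) = 1 := by
            rw [← hPlen, hPc]
            rfl
          have hWlen : (psiW a v ++ [a, b]).length = (psiW a v).length + 2 := by simp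
          omega
        · -- tt = t0 ++ [d]
          rw [List.concat_eq_append] at htt
          obtain ⟨z, hz⟩ := psiW_concat a d t0
          have hPz : P = (c :: z) ++ [d] := by
            rw [hP0, htt, hz]
            simp
          have hdb : d = b := by
            have h5 := hPz.symm.trans hP1
            have h6 := (List.append_inj' h5 rfl).2
            simpa using h6
          rw [hdb] at htt hz hPz
          have h7 := hPpal
          rw [hPz] at h7
          have h8 : ((c :: z) ++ [b]).reverse = b :: (z.reverse ++ [c]) := by simp
          rw [h8] at h7
          have h9 := List.cons_eq_cons.mp h7
          have hcb : c = b := h9.1.symm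
          have h10 := h9.2
          rw [hcb] at h10
          have h10' : z.reverse ++ [b] = z ++ [b] := by simpa using h10
          have hzpal : z.reverse = z := List.append_cancel_right h10'
          have hza : psiW a t0 ++ [a] = z := by
            apply List.append_cancel_right (bs := [b])
            rw [← hz, psiW_append, psiW_singleton, if_neg hb]
            simp
          have ht0pal : t0.reverse = t0 := pal_of_psiW_pal a t0 (by rw [hza]; exact hzpal)
          have hct' : b :: tt <:+ v ++ [b] := by have hx := hct; rw [hcb] at hx; exact hx
          obtain ⟨t', ht'⟩ := hct'
          have hp'pal : (b :: tt).reverse = b :: tt := by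
            rw [htt]
            simp [ht0pal]
          have hCpal : ((v ++ [b]) ++ t'.reverse).reverse = (v ++ [b]) ++ t'.reverse := by
            rw [← ht', List.reverse_append, List.reverse_append, List.reverse_reverse,
              hp'pal, List.append_assoc]
          have hC := stepB a (w := v ++ [b]) (r := r) ⟨⟨t, ht⟩, hr2, hr3⟩
            (C := (v ++ [b]) ++ t'.reverse)
            (List.prefix_append _ _) hCpal
            (by
              have := congrArg List.length ht'
              simp at this ⊢
              omega)
          have h1 : (psiW a ((v ++ [b]) ++ t'.reverse)).length =
              (psiW a (v ++ [b])).length + (psiW a t').length := by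
            rw [psiW_append, List.length_append, psiW_length_reverse]
          have h2 : (psiW a (v ++ [b])).length =
              (psiW a t').length + (psiW a (b :: tt)).length := by
            rw [← ht', psiW_append, List.length_append]
          have hp'len : (psiW a (b :: tt)).length = (psiW a t0).length + 4 := by
            rw [psiW_cons, if_neg hb, htt, psiW_append, psiW_singleton, if_neg hb]
            simp
          have hzlen : z.length = (psiW a t0).length + 1 := by
            rw [← hza]
            simp
          have hG : palSuffLen (psiW a v ++ [a, b]) = z.length + 2 := by
            rw [← hPlen, hPz]
            simp
          have hWlen : (psiW a v ++ [a, b]).length = (psiW a (v ++ [b])).length := by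
            rw [hWf]
          omega
  have hlow := pal_len_lower (psiW a v ++ [a, b]) s hs hspal
  simp only [List.length_append, List.length_cons, List.length_nil] at hKEY hlow ⊢
  omega

def palL : List A → List A
  | [] => []
  | a :: v => psiW a (palL v) ++ [a]

lemma palL_closure (l : List A) (b : A) :
    IsPalClosure (palL l ++ [b]) (palL (l ++ [b])) := by
  induction l with
  | nil =>
    refine ⟨by simp [palL, psiW], by simp [palL, psiW], ?_⟩
    intro q hq _
    have := hq.length_le
    simp [palL, psiW] at this ⊢
    omega
  | cons a l ih =>
    have hcx := crux a b (palL l) (palL (l ++ [b])) ih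
    have e1 : palL (a :: l) ++ [b] = psiW a (palL l) ++ [a, b] := by
      show (psiW a (palL l) ++ [a]) ++ [b] = _
      simp
    have e2 : palL ((a :: l) ++ [b]) = psiW a (palL (l ++ [b])) ++ [a] := by
      show palL (a :: (l ++ [b])) = _
      rfl
    rw [e1, e2]
    exact hcx

def muL : List A → List A → List A
  | [], w => w
  | a :: l, w => psiW a (muL l w)

lemma palL_justin (l : List A) (b : A) :
    palL (l ++ [b]) = muL l [b] ++ palL l := by
  induction l with
  | nil => simp [palL, muL, psiW]
  | cons a l ih =>
    show palL (a :: (l ++ [b])) = _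
    show psiW a (palL (l ++ [b])) ++ [a] = _
    rw [ih, psiW_append]
    show _ = psiW a (muL l [b]) ++ (psiW a (palL l) ++ [a])
    simp

def dwL (x : ℕ → A) (n : ℕ) : List A := (List.range' 1 n).map x

lemma dwL_succ (x : ℕ → A) (n : ℕ) : dwL x (n + 1) = dwL x n ++ [x (n + 1)] := by
  rw [dwL, List.range'_concat, List.map_append, dwL]
  have : 1 + 1 * n = n + 1 := by omega
  rw [this]
  rfl

lemma muL_muW (x : ℕ → A) (n : ℕ) (w : List A) : muL (dwL x n) w = muW x n w := by
  induction n generalizing w with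
  | zero => rfl
  | succ n ih =>
    have hstep : ∀ (l : List A) (a : A) (w : List A), muL (l ++ [a]) w = muL l (psiW a w) := by
      intro l
      induction l with
      | nil => intro a w; rfl
      | cons c l ih2 =>
        intro a w
        show psiW c (muL (l ++ [a]) w) = psiW c (muL l (psiW a w))
        rw [ih2]
    rw [dwL_succ, hstep]
    exact ih _

lemma muW_append (x : ℕ → A) (n : ℕ) (p q : List A) :
    muW x n (p ++ q) = muW x n p ++ muW x n q := by
  induction n generalizing p q with
  | zero => rfl
  | succ n ih =>
    show muW x n (psiW (x (n + 1)) (p ++ q)) = _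
    rw [psiW_append, ih]
    rfl

section Assembly

variable (x : ℕ → A) (u : ℕ → List A) (hu1 : u 1 = [])
  (hu : ∀ n : ℕ, 1 ≤ n → IsPalClosure (u n ++ [x n]) (u (n + 1)))

include hu1 hu in
lemma u_eq_palL : ∀ n : ℕ, u (n + 1) = palL (dwL x n) := by
  intro n
  induction n with
  | zero => simpa [dwL, palL] using hu1
  | succ n ih =>
    have h1 := hu (n + 1) (by omega)
    rw [ih] at h1
    have h2 := palL_closure (dwL x n) (x (n + 1))
    have h3 : u (n + 1 + 1) = palL (dwL x n ++ [x (n + 1)]) := isPalClosure_unique h1 h2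
    rw [h3, ← dwL_succ]

include hu1 hu in
lemma justinW (m : ℕ) : u (m + 2) = muW x m [x (m + 1)] ++ u (m + 1) := by
  rw [u_eq_palL x u hu1 hu (m + 1), u_eq_palL x u hu1 hu m, dwL_succ, palL_justin, muL_muW]

include hu1 hu in
lemma key_len : ∀ m c, (∃ i, 1 ≤ i ∧ i ≤ m ∧ x i = c) →
    (muW x m [c]).length ≤ (u (m + 1)).length := by
  intro m
  induction m with
  | zero =>
    rintro c ⟨i, h1, h2, -⟩
    omega
  | succ m ih =>
    rintro c ⟨i, h1, h2, h3⟩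
    have hm : muW x (m + 1) [c] = muW x m (psiW (x (m + 1)) [c]) := rfl
    have hj := justinW x u hu1 hu m
    by_cases hc : c = x (m + 1)
    · have hone : psiW (x (m + 1)) [c] = [c] := by simp [psiW, hc]
      rw [hm, hone]
      have hlen := congrArg List.length hj
      rw [List.length_append] at hlen
      rw [← hc] at hlen
      have e2 : u (m + 1 + 1) = u (m + 2) := rfl
      rw [e2]
      omega
    · have htwo : psiW (x (m + 1)) [c] = [x (m + 1)] ++ [c] := by simp [psiW, hc]
      rw [hm, htwo, muW_append, List.length_append]
      have hi : i ≤ m := by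
        have : i ≠ m + 1 := fun h => hc (by rw [← h3, h])
        omega
      have hih := ih c ⟨i, h1, hi, h3⟩
      have hlen := congrArg List.length hj
      rw [List.length_append] at hlen
      have e2 : u (m + 1 + 1) = u (m + 2) := rfl
      rw [e2]
      omega

end Assembly

end PalDev

theorem h_prefix_u (x : ℕ → A) (u : ℕ → List A) (hu1 : u 1 = [])
    (hu : ∀ n : ℕ, 1 ≤ n → IsPalClosure (u n ++ [x n]) (u (n + 1))) (n : ℕ) (hn : 1 ≤ n)
    (hocc : ∃ i : ℕ, 1 ≤ i ∧ i < n ∧ x i = x n) :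
    hW x (n - 1) <+: u n ∧ (hW x (n - 1)).reverse <:+ u n := by
  obtain ⟨i, hi1, hi2, hi3⟩ := hocc
  obtain ⟨m, rfl⟩ : ∃ m, n = m + 2 := ⟨n - 2, by omega⟩
  have hh : hW x (m + 2 - 1) = muW x (m + 1) [x (m + 2)] := rfl
  have hlen := PalDev.key_len x u hu1 hu (m + 1) (x (m + 2)) ⟨i, hi1, by omega, hi3⟩
  have hj := PalDev.justinW x u hu1 hu (m + 1)
  have hj' : u (m + 3) = muW x (m + 1) [x (m + 2)] ++ u (m + 2) := hj
  have hpal3 := (hu (m + 2) (by omega)).2.1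
  have hupal : (u (m + 2)).reverse = u (m + 2) := by
    have := PalDev.u_eq_palL x u hu1 hu (m + 1)
    rw [this]
    have hp : ∀ l : List A, (PalDev.palL l).reverse = PalDev.palL l := by
      intro l
      induction l with
      | nil => rfl
      | cons a v ih =>
        show (psiW a (PalDev.palL v) ++ [a]).reverse = _
        rw [PalDev.psiW_reverse, ih]
        rfl
    exact hp _
  have hpre32 : u (m + 2) <+: u (m + 3) :=
    (List.prefix_append (u (m + 2)) [x (m + 2)]).trans (hu (m + 2) (by omega)).1
  have hpre : muW x (m + 1) [x (m + 2)] <+: u (m + 2) :=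
    List.prefix_of_prefix_length_le ⟨u (m + 2), hj'.symm⟩ hpre32 hlen
  constructor
  · rw [hh]
    exact hpre
  · rw [hh, ← hupal]
    exact List.reverse_suffix.mpr hpre
end

section
/- Write the directive word as x_1 x_2 ⋯ = y_1^{d_1} y_2^{d_2} ⋯ with y_i ≠ y_{i+1} and d_i > 0, and set g(m) = d_1 + ⋯ + d_{m-1} + 1. Then u_{g(m+1)} = (h_{g(m)-1})^{d_m} u_{g(m)} = u_{g(m)} (\bar{h_{g(m)-1}})^{d_m}. -/
variable {A : Type*} [DecidableEq A]

namespace UGaux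

lemma psiW_append (a : A) (v w : List A) : psiW a (v ++ w) = psiW a v ++ psiW a w :=
  List.flatMap_append

lemma muW_append (x : ℕ → A) : ∀ (n : ℕ) (v w : List A),
    muW x n (v ++ w) = muW x n v ++ muW x n w
  | 0, v, w => rfl
  | n + 1, v, w => by
    show muW x n (psiW (x (n+1)) (v ++ w)) = _
    rw [psiW_append, muW_append x n]
    rfl

lemma pal_getElem {p : List A} (hp : p.reverse = p) {i : ℕ} (h : i < p.length) :
    p[i] = p[p.length - 1 - i]'(by omega) := by
  have h2 : i < p.reverse.length := by simpa using h
  have := List.getElem_reverse (l := p) (i := i) h2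
  simp only [hp] at this
  exact this

lemma eq_pal {w p q : List A} (hp : p.reverse = p) (hq : q.reverse = q)
    (h1 : w <+: p) (h2 : w <+: q) (hlen : p.length = q.length)
    (hle : p.length ≤ 2 * w.length) : p = q := by
  refine List.ext_getElem hlen (fun i hi1 hi2 => ?_)
  rcases lt_or_ge i w.length with hlt | hge
  · rw [← h1.getElem hlt, ← h2.getElem hlt]
  · have hj : p.length - 1 - i < w.length := by omega
    have hj' : q.length - 1 - i < w.length := by omega
    rw [pal_getElem hp hi1, pal_getElem hq hi2, ← h1.getElem hj, ← h2.getElem hj']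
    simp only [show q.length - 1 - i = p.length - 1 - i from by omega]

/-- If `q` is a palindrome with prefix `w` and `|q| ≤ 2|w|`, then the suffix of `w`
of length `2|w| - |q|` is a palindrome. -/
lemma suffix_pal {w q : List A} (hq : q.reverse = q) (hpre : w <+: q)
    (hle : q.length ≤ 2 * w.length) :
    (w.drop (q.length - w.length)).reverse = w.drop (q.length - w.length) := by
  have hwq : w.length ≤ q.length := hpre.length_le
  set k := q.length - w.length with hk
  refine List.ext_getElem (by simp) (fun i hi1 hi2 => ?_)
  rw [List.getElem_reverse, List.getElem_drop, List.getElem_drop]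
  have hi : i < w.length - k := by simpa using hi2
  have h1 : k + ((w.drop k).length - 1 - i) = w.length - 1 - i := by
    simp only [List.length_drop]; omega
  simp only [h1]
  rw [hpre.getElem (by omega), hpre.getElem (by omega),
    pal_getElem hq (by omega)]
  simp only [show q.length - 1 - (w.length - 1 - i) = k + i from by omega]

end UGaux
namespace UGaux
set_option linter.unusedSectionVars false

section U
variable {x : ℕ → A} {u : ℕ → List A}

lemma u_pal (hu1 : u 1 = []) (hu : ∀ n, 1 ≤ n → IsPalClosure (u n ++ [x n]) (u (n+1))) :
    ∀ n, 1 ≤ n → (u n).reverse = u n := by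
  intro n hn
  obtain ⟨m, rfl⟩ : ∃ m, n = m + 1 := ⟨n - 1, by omega⟩
  rcases Nat.eq_zero_or_pos m with rfl | hm
  · simp [hu1]
  · exact (hu m hm).2.1

lemma u_chain (hu : ∀ n, 1 ≤ n → IsPalClosure (u n ++ [x n]) (u (n+1))) :
    ∀ m n, 1 ≤ m → m ≤ n → u m <+: u n := by
  intro m n hm hmn
  induction n, hmn using Nat.le_induction with
  | base => exact List.prefix_refl _
  | succ n hmn ih =>
    exact ih.trans (((u n).prefix_append [x n]).trans (hu n (by omega)).1)

lemma u_px (hu : ∀ n, 1 ≤ n → IsPalClosure (u n ++ [x n]) (u (n+1)))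
    {j n : ℕ} (hj : 1 ≤ j) (hjn : j ≤ n) : u j ++ [x j] <+: u (n+1) :=
  (hu j hj).1.trans (u_chain hu (j+1) (n+1) (by omega) (by omega))

lemma u_len_lt (hu : ∀ n, 1 ≤ n → IsPalClosure (u n ++ [x n]) (u (n+1)))
    {j n : ℕ} (hj : 1 ≤ j) (hjn : j ≤ n) : (u j).length < (u (n+1)).length := by
  have := (u_px hu hj hjn).length_le
  simpa using this

lemma u_getElem_x (hu : ∀ n, 1 ≤ n → IsPalClosure (u n ++ [x n]) (u (n+1)))
    {j n : ℕ} (hj : 1 ≤ j) (hjn : j ≤ n) :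
    (u (n+1))[(u j).length]'(u_len_lt hu hj hjn) = x j := by
  rw [← (u_px hu hj hjn).getElem (by simp)]
  simp

lemma u_two (hu : ∀ n, 1 ≤ n → IsPalClosure (u n ++ [x n]) (u (n+1)))
    {n : ℕ} (hn : 1 ≤ n) : (u (n+1)).length ≤ 2 * (u n ++ [x n]).length := by
  have := (hu n hn).2.2 ((u n ++ [x n]) ++ (u n ++ [x n]).reverse)
    (List.prefix_append _ _) (by simp)
  simp only [List.length_append, List.length_reverse] at this ⊢
  omega

lemma letters_step (hu : ∀ n, 1 ≤ n → IsPalClosure (u n ++ [x n]) (u (n+1)))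
    {n : ℕ} (hn : 1 ≤ n) : ∀ a ∈ u (n+1), a ∈ u n ++ [x n] := by
  intro a ha
  rw [List.mem_iff_getElem] at ha
  obtain ⟨i, hi, rfl⟩ := ha
  have hpre : (u n ++ [x n]) <+: u (n+1) := (hu n hn).1
  have h2 : (u (n+1)).length ≤ 2 * (u n ++ [x n]).length := u_two hu hn
  simp only [List.length_append, List.length_singleton] at h2
  rcases lt_or_ge i (u n ++ [x n]).length with h | h
  · rw [← hpre.getElem h]; exact List.getElem_mem _
  · rw [pal_getElem (hu n hn).2.1 hi]
    have h3 : (u (n+1)).length - 1 - i < (u n ++ [x n]).length := by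
      simp only [List.length_append, List.length_singleton] at h ⊢; omega
    rw [← hpre.getElem h3]; exact List.getElem_mem _

lemma u_letters (hu1 : u 1 = []) (hu : ∀ n, 1 ≤ n → IsPalClosure (u n ++ [x n]) (u (n+1))) :
    ∀ n, 1 ≤ n → ∀ a ∈ u (n+1), ∃ i, 1 ≤ i ∧ i ≤ n ∧ x i = a := by
  intro n hn
  induction n, hn using Nat.le_induction with
  | base =>
    intro a ha
    have := letters_step hu (le_refl 1) a ha
    rw [hu1] at this
    simp only [List.nil_append, List.mem_singleton] at this
    exact ⟨1, le_refl _, le_refl _, this.symm⟩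
  | succ n hn ih =>
    intro a ha
    rcases List.mem_append.1 (letters_step hu (by omega) a ha) with h | h
    · obtain ⟨i, h1, h2, h3⟩ := ih a h
      exact ⟨i, h1, by omega, h3⟩
    · exact ⟨n+1, by omega, le_refl _, (List.mem_singleton.1 h).symm⟩

lemma u_palPrefix (hu1 : u 1 = []) (hu : ∀ n, 1 ≤ n → IsPalClosure (u n ++ [x n]) (u (n+1))) :
    ∀ n, 1 ≤ n → ∀ p, p <+: u n → p.reverse = p → ∃ j, 1 ≤ j ∧ j ≤ n ∧ p = u j := by
  intro n hn
  induction n, hn using Nat.le_induction with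
  | base =>
    intro p hp _
    refine ⟨1, le_refl _, le_refl _, ?_⟩
    rw [hu1] at hp ⊢
    exact List.prefix_nil.1 hp
  | succ n hn ih =>
    intro p hp hpal
    rcases le_or_gt p.length (u n).length with h | h
    · obtain ⟨j, h1, h2, h3⟩ :=
        ih p (List.prefix_of_prefix_length_le hp (u_chain hu n (n+1) hn (by omega)) h) hpal
      exact ⟨j, h1, by omega, h3⟩
    · have hw : (u n ++ [x n]) <+: p :=
        List.prefix_of_prefix_length_le (hu n hn).1 hp (by simp; omega)
      have hmin := (hu n hn).2.2 p hw hpal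
      exact ⟨n+1, by omega, le_refl _, hp.eq_of_length (le_antisymm hp.length_le hmin)⟩

end U
end UGaux

namespace UGaux
set_option linter.unusedSectionVars false

section U2
variable {x : ℕ → A} {u : ℕ → List A}

lemma getElem_idx {l : List A} {i j : ℕ} (h : i = j) (hi : i < l.length) :
    l[i] = l[j]'(h ▸ hi) := by subst h; rfl

/-- Extraction: a too-short palindrome extension of `u (n+1) ++ [x (n+1)]` yields an
earlier occurrence of the letter `x (n+1)`. -/
lemma extract (hu1 : u 1 = []) (hu : ∀ n, 1 ≤ n → IsPalClosure (u n ++ [x n]) (u (n+1)))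
    {n : ℕ} (hn : 1 ≤ n) {q : List A}
    (hq : u (n+1) ++ [x (n+1)] <+: q) (hqpal : q.reverse = q)
    (hup : q.length + 2 ≤ 2 * (u (n+1) ++ [x (n+1)]).length) :
    ∃ j, 1 ≤ j ∧ j ≤ n ∧ x j = x (n+1) ∧
      (u j).length + q.length + 2 = 2 * (u (n+1) ++ [x (n+1)]).length := by
  set w := u (n+1) ++ [x (n+1)] with hwdef
  have hupal : (u (n+1)).reverse = u (n+1) := u_pal hu1 hu (n+1) (by omega)
  have hL1 : 1 ≤ (u (n+1)).length := by
    have := u_len_lt hu (le_refl 1) hn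
    simp [hu1] at this; omega
  have hwlen : w.length = (u (n+1)).length + 1 := by simp [hwdef]
  have hwq : w.length ≤ q.length := hq.length_le
  have hq2 : q.length ≤ 2 * w.length := by omega
  have hps := suffix_pal hqpal hq hq2
  set p := w.drop (q.length - w.length) with hpdef
  have hplen : p.length = 2 * w.length - q.length := by
    simp [hpdef]; omega
  obtain ⟨s'', hs''⟩ : ∃ s'', 2 * w.length - q.length = s'' + 2 := ⟨2 * w.length - q.length - 2, by omega⟩
  have hs''L : s'' < (u (n+1)).length := by omega
  -- p = take s (w.reverse), w.reverse = x (n+1) :: u (n+1)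
  have hwrev : w.reverse = x (n+1) :: u (n+1) := by
    simp [hwdef, hupal]
  have hrevp : p.reverse <+: w.reverse := List.reverse_prefix.2 (List.drop_suffix _ _)
  have hptake : p = List.take (s'' + 2) (x (n+1) :: u (n+1)) := by
    conv_lhs => rw [← hps]
    rw [List.prefix_iff_eq_take.1 hrevp, hwrev]
    congr 1
    simp [hplen, hs'']
  set m := List.take s'' (u (n+1)) with hmdef
  set c := (u (n+1))[s'']'hs''L with hcdef
  have hmc : List.take (s'' + 1) (u (n+1)) = m ++ [c] := by
    rw [List.take_succ, List.getElem?_eq_getElem hs''L]; rfl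
  have hp_eq : p = x (n+1) :: (m ++ [c]) := by
    rw [hptake, List.take_succ_cons, hmc]
  have h1 : c :: (m.reverse ++ [x (n+1)]) = x (n+1) :: (m ++ [c]) := by
    have h0 := hps
    rw [hp_eq] at h0
    simpa using h0
  have hc : c = x (n+1) := (List.cons.injEq _ _ _ _ ▸ h1).1
  have hmpal : m.reverse = m := by
    have h2 : m.reverse ++ [x (n+1)] = m ++ [c] := (List.cons.injEq _ _ _ _ ▸ h1).2
    rw [hc] at h2
    exact List.append_cancel_right h2
  obtain ⟨j, hj1, hjn1, hjm⟩ :=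
    u_palPrefix hu1 hu (n+1) (by omega) m (List.take_prefix _ _) hmpal
  have hmlen : m.length = s'' := by simp [hmdef]; omega
  have hjn : j ≤ n := by
    rcases Nat.lt_or_ge j (n+1) with h | h
    · omega
    · exfalso
      have : m = u (n+1) := by rw [hjm]; congr 1; omega
      rw [this] at hmlen; omega
  have hxj : x j = x (n+1) := by
    have hlenj : (u j).length = s'' := by rw [← hjm]; exact hmlen
    have := u_getElem_x hu hj1 hjn
    rw [getElem_idx hlenj] at this
    rw [← this, ← hcdef, hc]
  exact ⟨j, hj1, hjn, hxj, by rw [hjm] at hmlen; omega⟩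

end U2
end UGaux

namespace UGaux
set_option linter.unusedSectionVars false

section U3
variable {x : ℕ → A} {u : ℕ → List A}

lemma psiW_singleton (a b : A) : psiW a [b] = if b = a then [a] else [a, b] := by
  simp [psiW]

lemma key (hu1 : u 1 = []) (hu : ∀ n, 1 ≤ n → IsPalClosure (u n ++ [x n]) (u (n+1))) :
    ∀ n, 1 ≤ n →
      (u (n+1) = muW x (n-1) [x n] ++ u n) ∧
      (∀ k, 1 ≤ k → k ≤ n → (∀ i, k < i → i ≤ n → x i ≠ x k) →
        muW x n [x k] ++ u k = u (n+1)) ∧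
      (∀ b, (∀ i, 1 ≤ i → i ≤ n → x i ≠ b) → muW x n [b] = u (n+1) ++ [b]) := by
  intro n hn
  induction n, hn using Nat.le_induction with
  | base =>
    have h := hu 1 (le_refl 1)
    rw [hu1, List.nil_append] at h
    have hmin := h.2.2 [x 1] (List.prefix_refl _) (by simp)
    have hu2 : [x 1] = u (1+1) :=
      h.1.eq_of_length (le_antisymm h.1.length_le (by simpa using hmin))
    refine ⟨?_, ?_, ?_⟩
    · rw [← hu2, hu1]; rfl
    · intro k hk1 hk2 _
      have hk : k = 1 := le_antisymm hk2 hk1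
      subst hk
      show muW x 0 (psiW (x 1) [x 1]) ++ u 1 = u (1+1)
      rw [psiW_singleton, if_pos rfl, hu1, ← hu2]
      rfl
    · intro b hb
      have hxb : x 1 ≠ b := hb 1 (le_refl _) (le_refl _)
      show muW x 0 (psiW (x 1) [b]) = u (1+1) ++ [b]
      rw [psiW_singleton, if_neg (fun h => hxb h.symm), ← hu2]
      rfl
  | succ n hn ih =>
    obtain ⟨ihS, ihK, ihF⟩ := ih
    have hupal : (u (n+1)).reverse = u (n+1) := u_pal hu1 hu (n+1) (by omega)
    have hclos := hu (n+1) (by omega)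
    set w := u (n+1) ++ [x (n+1)] with hwdef
    set Q := muW x n [x (n+1)] ++ u (n+1) with hQdef
    have hwlen : w.length = (u (n+1)).length + 1 := by simp [hwdef]
    have hQ : IsPalClosure w Q := by
      by_cases hocc : ∃ i, 1 ≤ i ∧ i ≤ n ∧ x i = x (n+1)
      · -- the letter x (n+1) occurred before
        classical
        obtain ⟨i0, hi01, hi0n, hxi0⟩ := hocc
        set k := Nat.findGreatest (fun i => 1 ≤ i ∧ x i = x (n+1)) n with hk
        have hPk : 1 ≤ k ∧ x k = x (n+1) :=
          Nat.findGreatest_spec (P := fun i => 1 ≤ i ∧ x i = x (n+1)) (m := i0)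
            hi0n ⟨hi01, hxi0⟩
        have hk1 : 1 ≤ k := hPk.1
        have hkn : k ≤ n := Nat.findGreatest_le n
        have hlast : ∀ i, k < i → i ≤ n → x i ≠ x (n+1) := fun i h1 h2 hxi =>
          (Nat.findGreatest_is_greatest h1 h2) ⟨by omega, hxi⟩
        have hlast' : ∀ i, k < i → i ≤ n → x i ≠ x k := by
          intro i h1 h2 hxi; exact hlast i h1 h2 (hxi.trans hPk.2)
        have hCk : muW x n [x (n+1)] ++ u k = u (n+1) := by
          have := ihK k hk1 hkn hlast'
          rwa [hPk.2] at this
        set h := muW x n [x (n+1)] with hh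
        have hukpal : (u k).reverse = u k := u_pal hu1 hu k hk1
        have hrev : u k ++ h.reverse = u (n+1) := by
          have h0 := congrArg List.reverse hCk
          rw [List.reverse_append, hukpal, hupal] at h0
          exact h0
        have hQpal : Q.reverse = Q := by
          calc Q.reverse = u (n+1) ++ h.reverse := by
                rw [hQdef, List.reverse_append, hupal]
          _ = h ++ (u k ++ h.reverse) := by rw [← hCk, List.append_assoc]
          _ = Q := by rw [hrev]
        have hkpre : u k <+: u (n+1) := u_chain hu k (n+1) hk1 (by omega)
        obtain ⟨t, ht⟩ := hkpre
        have hlen_lt : (u k).length < (u (n+1)).length := u_len_lt hu hk1 hkn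
        have htne : t ≠ [] := by
          intro h0; rw [h0, List.append_nil] at ht; rw [ht] at hlen_lt; omega
        obtain ⟨c, t', rfl⟩ := List.exists_cons_of_ne_nil htne
        have hchead : c = x (n+1) := by
          have h0 : (u (n+1))[(u k).length]'hlen_lt = x k := u_getElem_x hu hk1 hkn
          have h1 : (u k ++ (c :: t'))[(u k).length]'(by rw [ht]; exact hlen_lt) = x k := by
            simp only [ht]; exact h0
          rw [List.getElem_append_right (le_refl _)] at h1
          simp only [Nat.sub_self, List.getElem_cons_zero] at h1
          rw [h1, hPk.2]
        have hwpre : w <+: Q := by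
          refine ⟨t', ?_⟩
          calc w ++ t' = u (n+1) ++ (c :: t') := by
                rw [hwdef, hchead]; simp
          _ = h ++ (u k ++ (c :: t')) := by rw [← hCk, List.append_assoc]
          _ = Q := by rw [ht]
        refine ⟨hwpre, hQpal, ?_⟩
        intro q hq hqpal
        by_contra hcon
        push_neg at hcon
        have hlh : h.length + (u k).length = (u (n+1)).length := by
          have h0 := congrArg List.length hCk
          simpa using h0
        have hQlen : Q.length = h.length + (u (n+1)).length := by simp [hQdef]
        obtain ⟨j, hj1, hjn, hxj, hjlen⟩ := extract hu1 hu (by omega : 1 ≤ n) hq hqpal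
          (by simp only [List.length_append, List.length_singleton] at hQlen hwlen ⊢; omega)
        -- |u j| = 2|w| - |q| - 2 ≥ |u k| + 1, but x j = x (n+1) forces j ≤ k
        have hjk : j ≤ k := by
          by_contra hjk
          exact hlast j (by omega) hjn hxj
        have hjklen : (u j).length ≤ (u k).length :=
          (u_chain hu j k hj1 hjk).length_le
        simp only [List.length_append, List.length_singleton] at hjlen
        omega
      · push_neg at hocc
        have hCf : muW x n [x (n+1)] = u (n+1) ++ [x (n+1)] := ihF (x (n+1)) hocc
        have hQeq : Q = u (n+1) ++ [x (n+1)] ++ u (n+1) := by rw [hQdef, hCf]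
        refine ⟨⟨u (n+1), by rw [hQeq]⟩, ?_, ?_⟩
        · rw [hQeq]; simp [List.reverse_append, hupal]
        · intro q hq hqpal
          by_contra hcon
          push_neg at hcon
          have hQlen : Q.length = 2 * w.length - 1 := by
            rw [hQeq]; simp [hwdef]; omega
          obtain ⟨j, hj1, hjn, hxj, _⟩ := extract hu1 hu (by omega : 1 ≤ n) hq hqpal
            (by simp only [List.length_append, List.length_singleton] at hQlen hwlen ⊢; omega)
          exact hocc j hj1 hjn hxj
    -- S (n+1)
    have hS : u (n+1+1) = Q := by
      have h1 := hclos.2.2 Q hQ.1 hQ.2.1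
      have h2 := hQ.2.2 (u (n+1+1)) hclos.1 hclos.2.1
      have h3 : (u (n+1+1)).length ≤ 2 * w.length := u_two hu (by omega)
      exact eq_pal hclos.2.1 hQ.2.1 hclos.1 hQ.1 (le_antisymm h1 h2) h3
    refine ⟨by simpa using hS, ?_, ?_⟩
    · intro k hk1 hk2 hlast
      rcases Nat.lt_or_ge k (n+1) with hkn | hkn
      · -- k ≤ n, so x (n+1) ≠ x k
        have hne : x (n+1) ≠ x k := hlast (n+1) (by omega) (le_refl _)
        show muW x n (psiW (x (n+1)) [x k]) ++ u k = u (n+1+1)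
        rw [psiW_singleton, if_neg (fun h0 => hne h0.symm),
          show [x (n+1), x k] = [x (n+1)] ++ [x k] from rfl, muW_append,
          List.append_assoc,
          ihK k hk1 (by omega) (fun i h1 h2 hxi => hlast i h1 (by omega) hxi),
          hS, hQdef]
      · have hk : k = n+1 := by omega
        subst hk
        show muW x n (psiW (x (n+1)) [x (n+1)]) ++ u (n+1) = u (n+1+1)
        rw [psiW_singleton, if_pos rfl, hS, hQdef]
    · intro b hb
      have hne : x (n+1) ≠ b := hb (n+1) (by omega) (le_refl _)
      show muW x n (psiW (x (n+1)) [b]) = u (n+1+1) ++ [b]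
      rw [psiW_singleton, if_neg (fun h0 => hne h0.symm),
        show [x (n+1), b] = [x (n+1)] ++ [b] from rfl, muW_append,
        ihF b (fun i h1 h2 => hb i h1 (by omega)),
        hS, hQdef, List.append_assoc]

end U3
end UGaux

namespace UGaux
set_option linter.unusedSectionVars false

section U4
variable {x : ℕ → A} {u : ℕ → List A}

lemma hW_eq (hu1 : u 1 = []) (hu : ∀ n, 1 ≤ n → IsPalClosure (u n ++ [x n]) (u (n+1)))
    {n : ℕ} (hn : 1 ≤ n) : u (n+1) = hW x (n-1) ++ u n := by
  have h := (key hu1 hu n hn).1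
  rw [hW, show n - 1 + 1 = n from by omega]
  exact h

lemma hW_succ {n : ℕ} (h : x (n+2) = x (n+1)) : hW x (n+1) = hW x n := by
  show muW x n (psiW (x (n+1)) [x (n+2)]) = muW x n [x (n+1)]
  rw [h, psiW_singleton, if_pos rfl]

lemma rev_flatten_replicate (k : ℕ) (h : List A) :
    (List.replicate k h).flatten.reverse = (List.replicate k h.reverse).flatten := by
  induction k with
  | zero => simp
  | succ k ih =>
    rw [List.replicate_succ, List.flatten_cons, List.reverse_append, ih,
      List.replicate_succ', List.flatten_append]
    simp

end U4
end UGaux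


theorem u_g_succ (x : ℕ → A) (u : ℕ → List A) (hu1 : u 1 = [])
    (hu : ∀ n : ℕ, 1 ≤ n → IsPalClosure (u n ++ [x n]) (u (n + 1))) (y : ℕ → A) (d : ℕ → ℕ) (g : ℕ → ℕ)
    (hy : ∀ m : ℕ, 1 ≤ m → y m ≠ y (m + 1)) (hd : ∀ m : ℕ, 1 ≤ m → 0 < d m)
    (hg : ∀ m : ℕ, g m = (∑ i ∈ Finset.Icc 1 (m - 1), d i) + 1)
    (hx : ∀ m : ℕ, 1 ≤ m → ∀ n : ℕ, g m ≤ n → n < g (m + 1) → x n = y m) :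
    ∀ m : ℕ, 1 ≤ m →
      u (g (m + 1)) = (List.replicate (d m) (hW x (g m - 1))).flatten ++ u (g m) ∧
      u (g (m + 1)) = u (g m) ++ (List.replicate (d m) (hW x (g m - 1)).reverse).flatten := by
  intro m hm
  have hgm : 1 ≤ g m := by rw [hg]; omega
  have hdm := hd m hm
  have hg1 : g (m+1) = g m + d m := by
    obtain ⟨m', rfl⟩ : ∃ m', m = m' + 1 := ⟨m-1, by omega⟩
    rw [hg (m'+1+1), hg (m'+1)]
    simp only [Nat.add_sub_cancel]
    rw [Finset.sum_Icc_succ_top (by omega)]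
    omega
  have hconst : ∀ j, j < d m → hW x (g m - 1 + j) = hW x (g m - 1) := by
    intro j hj
    induction j with
    | zero => rfl
    | succ j ih =>
      have hx1 : x (g m - 1 + j + 2) = x (g m - 1 + j + 1) := by
        have e1 : x (g m + j) = y m := hx m hm (g m + j) (by omega) (by omega)
        have e2 : x (g m + j + 1) = y m := hx m hm (g m + j + 1) (by omega) (by omega)
        rw [show g m - 1 + j + 2 = g m + j + 1 from by omega,
          show g m - 1 + j + 1 = g m + j from by omega, e1, e2]
      calc hW x (g m - 1 + (j+1)) = hW x (g m - 1 + j) := by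
            rw [show g m - 1 + (j+1) = (g m - 1 + j) + 1 from by omega]
            exact UGaux.hW_succ hx1
      _ = hW x (g m - 1) := ih (by omega)
  have main : ∀ j, j ≤ d m →
      u (g m + j) = (List.replicate j (hW x (g m - 1))).flatten ++ u (g m) := by
    intro j hj
    induction j with
    | zero => simp
    | succ j ih =>
      have hstep : u (g m + j + 1) = hW x (g m + j - 1) ++ u (g m + j) :=
        UGaux.hW_eq hu1 hu (by omega)
      rw [show g m + (j+1) = g m + j + 1 from by omega, hstep, ih (by omega),
        show g m + j - 1 = g m - 1 + j from by omega, hconst j (by omega),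
        List.replicate_succ, List.flatten_cons, List.append_assoc]
  have h1 : u (g (m+1)) = (List.replicate (d m) (hW x (g m - 1))).flatten ++ u (g m) := by
    rw [hg1]; exact main (d m) (le_refl _)
  refine ⟨h1, ?_⟩
  have hpal : (u (g (m+1))).reverse = u (g (m+1)) :=
    UGaux.u_pal hu1 hu _ (by rw [hg (m+1)]; omega)
  have hpal2 : (u (g m)).reverse = u (g m) := UGaux.u_pal hu1 hu _ hgm
  calc u (g (m+1)) = (u (g (m+1))).reverse := hpal.symm
  _ = ((List.replicate (d m) (hW x (g m - 1))).flatten ++ u (g m)).reverse := by rw [← h1]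
  _ = u (g m) ++ (List.replicate (d m) (hW x (g m - 1)).reverse).flatten := by
      rw [List.reverse_append, hpal2, UGaux.rev_flatten_replicate]
end
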